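/- arXiv:0904.1319 — 5 statements merged into one kernel-verified Lean document; each statement's English description precedes it below -/
import Mathlib

section
/- If G is a finite free graph with girth at least 5, then φ(G) ≤ χ(G) + 4. -/
open SimpleGraph

variable {V : Type*} {W : Type*}

/-- An independent set in a simple graph. -/
def IsIndep (G : SimpleGraph V) (s : Set V) : Prop :=
  ∀ ⦃u⦄, u ∈ s → ∀ ⦃v⦄, v ∈ s → ¬ G.Adj u v

/-- A maximal independent set. -/
def IsMaxIndep (G : SimpleGraph V) (s : Set V) : Prop :=
  IsIndep G s ∧ ∀ t : Set V, IsIndep G t → s ⊆ t → s = t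

/-- A free independent set: an independent set contained in at least two
distinct maximal independent sets. -/
def IsFreeIndep (G : SimpleGraph V) (s : Set V) : Prop :=
  IsIndep G s ∧ ∃ M₁ M₂ : Set V, IsMaxIndep G M₁ ∧ IsMaxIndep G M₂ ∧ M₁ ≠ M₂ ∧ s ⊆ M₁ ∧ s ⊆ M₂

/-- A free graph: every vertex lies in some free independent set. -/
def IsFreeGraph (G : SimpleGraph V) : Prop :=
  ∀ v : V, ∃ F : Set V, IsFreeIndep G F ∧ v ∈ F

/-- A partition of the vertices into `t` free independent sets. -/
def FreePartition (G : SimpleGraph V) (t : ℕ) : Prop :=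
  ∃ P : Fin t → Set V, (∀ i, IsFreeIndep G (P i)) ∧ ∀ v : V, ∃! i, v ∈ P i

/-- The free chromatic number `φ(G)` (`∞` if no free partition exists). -/
noncomputable def freeChrom (G : SimpleGraph V) : ℕ∞ :=
  sInf {t : ℕ∞ | ∃ n : ℕ, t = n ∧ FreePartition G n}

/-- The chromatic number as a natural number. -/
noncomputable def chromNum (G : SimpleGraph V) : ℕ :=
  sInf {k : ℕ | G.Colorable k}

/-- The circular complete graph `K_{n/d}`. -/
def circKG (n d : ℕ) : SimpleGraph (Fin n) where
  Adj i j := i ≠ j ∧ d ≤ ((i : ℤ) - (j : ℤ)).natAbs ∧ ((i : ℤ) - (j : ℤ)).natAbs ≤ n - d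
  symm := by
    constructor
    intro i j h
    obtain ⟨h1, h2, h3⟩ := h
    refine ⟨h1.symm, ?_, ?_⟩ <;> omega
  loopless := by constructor; intro i h; exact h.1 rfl

/-- The circular chromatic number, as a real number. -/
noncomputable def circChrom (G : SimpleGraph V) : ℝ :=
  sInf {x : ℝ | ∃ n d : ℕ, 0 < d ∧ Nat.gcd n d = 1 ∧ x = (n : ℝ) / d ∧
    Nonempty (G →g circKG n d)}

/-- The Mycielskian of a graph. -/
def mycielskian (G : SimpleGraph V) : SimpleGraph (Option (V ⊕ V)) where
  Adj x y := match x, y with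
    | some (Sum.inl u), some (Sum.inl v) => G.Adj u v
    | some (Sum.inl u), some (Sum.inr v) => G.Adj u v
    | some (Sum.inr u), some (Sum.inl v) => G.Adj u v
    | some (Sum.inr _), none => True
    | none, some (Sum.inr _) => True
    | _, _ => False
  symm := by
    constructor
    rintro (_ | (u | u)) (_ | (v | v)) h <;> simp_all <;> exact G.adj_symm h
  loopless := by
    constructor
    rintro (_ | (u | u)) h <;> simp_all

/-- Vertex type of the iterated Mycielskian. -/
def MycV (V : Type u) : ℕ → Type u
  | 0 => V
  | t + 1 => Option (MycV V t ⊕ MycV V t)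

/-- The `t`-fold iterated Mycielskian. -/
def mycIter (G : SimpleGraph V) : ∀ t : ℕ, SimpleGraph (MycV V t)
  | 0 => G
  | t + 1 => mycielskian (mycIter G t)

/-- The maximum size of a free independent set. -/
noncomputable def freeAlpha (G : SimpleGraph V) : ℕ :=
  sSup {k : ℕ | ∃ F : Set V, IsFreeIndep G F ∧ k = F.ncard}

/-- The independence number. -/
noncomputable def alphaNum (G : SimpleGraph V) : ℕ :=
  sSup {k : ℕ | ∃ S : Set V, IsIndep G S ∧ k = S.ncard}

/-- `d(G)`: the minimum over edges `uv` of `|N(u) ∪ N(v)|`. -/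
noncomputable def dMin (G : SimpleGraph V) : ℕ :=
  sInf {k : ℕ | ∃ u v : V, G.Adj u v ∧ k = (G.neighborSet u ∪ G.neighborSet v).ncard}

/-- An `(a,b)`-free coloring of `G` with `t` colors. -/
def ABFree (G : SimpleGraph V) (a b t : ℕ) : Prop :=
  ∃ (P : Fin t → Set V) (e : Fin (t - a) → V × V),
    (∀ v : V, ∃! i, v ∈ P i) ∧
    (∀ i, IsIndep G (P i)) ∧
    (∀ i : Fin (t - a), IsFreeIndep G (P (Fin.castLE (Nat.sub_le t a) i))) ∧
    (∀ i : Fin (t - a), G.Adj (e i).1 (e i).2 ∧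
      (G.neighborSet (e i).1 ∪ G.neighborSet (e i).2) ∩ P (Fin.castLE (Nat.sub_le t a) i) = ∅) ∧
    (∀ v : V, Set.ncard {i : Fin (t - a) | v = (e i).1 ∨ v = (e i).2} ≤ b)

/-- The `(a,b)`-free chromatic number `φ^a_b(G)`. -/
noncomputable def abFreeChrom (G : SimpleGraph V) (a b : ℕ) : ℕ∞ :=
  sInf {t : ℕ∞ | ∃ n : ℕ, t = n ∧ ABFree G a b n}

/-- The Kneser graph `KG(m,n)`. -/
def kneser (m n : ℕ) : SimpleGraph {A : Finset (Fin m) // A.card = n} where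
  Adj A B := A ≠ B ∧ Disjoint A.1 B.1
  symm := ⟨fun A B h => ⟨h.1.symm, h.2.symm⟩⟩
  loopless := ⟨fun A h => h.1 rfl⟩

/-- The generalized Kneser graph `KG(m,n,s)`. -/
def genKneser (m n s : ℕ) : SimpleGraph {A : Finset (Fin m) // A.card = n} where
  Adj A B := A ≠ B ∧ (A.1 ∩ B.1).card ≤ s
  symm := ⟨fun A B h => ⟨h.1.symm, by rw [Finset.inter_comm]; exact h.2⟩⟩
  loopless := ⟨fun A h => h.1 rfl⟩

/-- 2-stability of a subset of `[m]`. -/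
def TwoStable (m : ℕ) (A : Finset (Fin m)) : Prop :=
  ∀ x ∈ A, ∀ y ∈ A, x ≠ y →
    2 ≤ ((x : ℤ) - (y : ℤ)).natAbs ∧ ((x : ℤ) - (y : ℤ)).natAbs ≤ m - 2

/-- The Schrijver graph `SG(m,n)`. -/
def schrijver (m n : ℕ) :
    SimpleGraph {A : Finset (Fin m) // A.card = n ∧ TwoStable m A} where
  Adj A B := A ≠ B ∧ Disjoint A.1 B.1
  symm := ⟨fun A B h => ⟨h.1.symm, h.2.symm⟩⟩
  loopless := ⟨fun A h => h.1 rfl⟩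

section AuxLemmas

variable {G : SimpleGraph V}

lemma IsIndep.mono {s t : Set V} (h : IsIndep G t) (hst : s ⊆ t) : IsIndep G s :=
  fun _ hu _ hv => h (hst hu) (hst hv)

lemma exists_maximal_indep {s : Set V} (hs : IsIndep G s) :
    ∃ M : Set V, IsMaxIndep G M ∧ s ⊆ M := by
  obtain ⟨M, hsM, hM, hmax⟩ := zorn_subset_nonempty {t : Set V | IsIndep G t}
    (fun c hc hchain _ => ⟨⋃₀ c, fun u hu v hv hadj => by
      obtain ⟨t1, ht1, hu1⟩ := hu
      obtain ⟨t2, ht2, hv2⟩ := hv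
      rcases hchain.total ht1 ht2 with h | h
      · exact hc ht2 (h hu1) hv2 hadj
      · exact hc ht1 hu1 (h hv2) hadj,
      fun t ht => Set.subset_sUnion_of_mem ht⟩) s hs
  exact ⟨M, ⟨hM, fun t ht hMt => le_antisymm hMt (hmax ht hMt)⟩, hsM⟩

lemma IsFreeIndep.mono {s t : Set V} (h : IsFreeIndep G t) (hst : s ⊆ t) : IsFreeIndep G s := by
  obtain ⟨hind, M1, M2, hM1, hM2, hne, h1, h2⟩ := h
  exact ⟨hind.mono hst, M1, M2, hM1, hM2, hne, hst.trans h1, hst.trans h2⟩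

/-- If an independent set has an edge entirely outside its closed neighborhood, it is free. -/
lemma free_of_outside_edge {s : Set V} (hs : IsIndep G s) {a b : V} (hab : G.Adj a b)
    (ha1 : a ∉ s) (ha2 : ∀ x ∈ s, ¬ G.Adj x a) (hb1 : b ∉ s) (hb2 : ∀ x ∈ s, ¬ G.Adj x b) :
    IsFreeIndep G s := by
  have hsa : IsIndep G (insert a s) := by
    intro u hu v hv hadj
    rcases hu with rfl | hu <;> rcases hv with rfl | hv
    · exact hadj.ne rfl
    · exact ha2 v hv hadj.symm
    · exact ha2 u hu hadj
    · exact hs hu hv hadj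
  have hsb : IsIndep G (insert b s) := by
    intro u hu v hv hadj
    rcases hu with rfl | hu <;> rcases hv with rfl | hv
    · exact hadj.ne rfl
    · exact hb2 v hv hadj.symm
    · exact hb2 u hu hadj
    · exact hs hu hv hadj
  obtain ⟨M1, hM1, hs1⟩ := exists_maximal_indep hsa
  obtain ⟨M2, hM2, hs2⟩ := exists_maximal_indep hsb
  refine ⟨hs, M1, M2, hM1, hM2, ?_, (Set.subset_insert a s).trans hs1,
    (Set.subset_insert b s).trans hs2⟩
  rintro rfl
  exact hM1.1 (hs1 (Set.mem_insert a s)) (hs2 (Set.mem_insert b s)) hab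

/-- In a free graph, every vertex has an edge avoiding its closed neighborhood. -/
lemma exists_edge_outside (hfree : IsFreeGraph G) (w : V) :
    ∃ a b : V, G.Adj a b ∧ a ≠ w ∧ b ≠ w ∧ ¬ G.Adj w a ∧ ¬ G.Adj w b := by
  obtain ⟨F, ⟨hFind, M1, M2, hM1, hM2, hne, hF1, hF2⟩, hwF⟩ := hfree w
  have hw1 : w ∈ M1 := hF1 hwF
  have hw2 : w ∈ M2 := hF2 hwF
  have hdiff : ∃ a, a ∈ M1 ∧ a ∉ M2 := by
    by_contra h
    push_neg at h
    exact hne (hM1.2 M2 hM2.1 h ▸ rfl)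
  obtain ⟨a, haM1, haM2⟩ := hdiff
  have hb : ∃ b ∈ M2, G.Adj a b := by
    by_contra h
    push_neg at h
    have hins : IsIndep G (insert a M2) := by
      intro u hu v hv hadj
      rcases hu with rfl | hu <;> rcases hv with rfl | hv
      · exact hadj.ne rfl
      · exact h v hv hadj
      · exact h u hu hadj.symm
      · exact hM2.1 hu hv hadj
    have := hM2.2 _ hins (Set.subset_insert a M2)
    exact haM2 (this ▸ Set.mem_insert a M2)
  obtain ⟨b, hbM2, hadj⟩ := hb
  have haw : a ≠ w := fun h => haM2 (h ▸ hw2)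
  have hbw : b ≠ w := by
    rintro rfl
    exact hM1.1 hw1 haM1 hadj.symm
  exact ⟨a, b, hadj, haw, hbw, fun h => hM1.1 hw1 haM1 h, fun h => hM2.1 hw2 hbM2 h⟩

end AuxLemmas
section Girth
variable {G : SimpleGraph V}

lemma cycle_len_ge (hg : 5 ≤ G.girth) {a : V} (w : G.Walk a a)
    (hw : w.IsCycle) : 5 ≤ w.length := by
  have hne : ¬ G.IsAcyclic := fun h => h w hw
  have htop : G.egirth ≠ ⊤ := fun h => hne (SimpleGraph.egirth_eq_top.mp h)
  have h5 : (5 : ℕ∞) ≤ G.egirth := by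
    rw [← ENat.coe_toNat htop]
    exact_mod_cast hg
  have := SimpleGraph.le_egirth.mp h5 a w hw
  exact_mod_cast this

lemma no_tri (hg : 5 ≤ G.girth) {a b c : V}
    (h1 : G.Adj a b) (h2 : G.Adj b c) (h3 : G.Adj c a) : False := by
  have hw : (Walk.cons h1 (Walk.cons h2 (Walk.cons h3 Walk.nil))).IsCycle := by
    simp [Walk.isCycle_def, Walk.isTrail_def, h1.ne, h2.ne, h3.ne, h1.ne', h2.ne', h3.ne',
      Sym2.eq_iff]
  have := cycle_len_ge hg _ hw
  simp at this

lemma no_c4 (hg : 5 ≤ G.girth) {a b c d : V}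
    (h1 : G.Adj a b) (h2 : G.Adj b c) (h3 : G.Adj c d) (h4 : G.Adj d a)
    (hac : a ≠ c) (hbd : b ≠ d) : False := by
  have hw : (Walk.cons h1 (Walk.cons h2 (Walk.cons h3 (Walk.cons h4 Walk.nil)))).IsCycle := by
    simp [Walk.isCycle_def, Walk.isTrail_def, h1.ne, h2.ne, h3.ne, h4.ne,
      h1.ne', h2.ne', h3.ne', h4.ne', hac, hbd, hac.symm, hbd.symm, Sym2.eq_iff]
  have := cycle_len_ge hg _ hw
  simp at this

end Girth
section Cover

variable {G : SimpleGraph V}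

lemma nbhd_indep (hg : 5 ≤ G.girth) (u : V) : IsIndep G {x | G.Adj u x} :=
  fun a ha b hb hab => no_tri hg ha hab (Adj.symm hb)

lemma singleton_free (hfree : IsFreeGraph G) (w : V) : IsFreeIndep G {w} := by
  obtain ⟨F, hF, hw⟩ := hfree w
  exact hF.mono (Set.singleton_subset_iff.mpr hw)

lemma disj4 {α : Type*} {A B C D : Set α}
    (hAB : ∀ x ∈ A, x ∉ B) (hAC : ∀ x ∈ A, x ∉ C) (hAD : ∀ x ∈ A, x ∉ D)
    (hBC : ∀ x ∈ B, x ∉ C) (hBD : ∀ x ∈ B, x ∉ D) (hCD : ∀ x ∈ C, x ∉ D) :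
    ∀ i j : Fin 4, i ≠ j → ∀ x, x ∈ ![A,B,C,D] i → x ∉ ![A,B,C,D] j := by
  intro i j hij x hxi hxj
  fin_cases i <;> fin_cases j <;>
    simp only [Fin.isValue, Matrix.cons_val_zero, Matrix.cons_val_one, Matrix.head_cons,
      Matrix.cons_val_two, Matrix.tail_cons, Matrix.cons_val_three] at hxi hxj <;>
    first
      | exact hij rfl
      | exact hAB x hxi hxj | exact hAC x hxi hxj | exact hAD x hxi hxj
      | exact hBC x hxi hxj | exact hBD x hxi hxj | exact hCD x hxi hxj
      | exact hAB x hxj hxi | exact hAC x hxj hxi | exact hAD x hxj hxi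
      | exact hBC x hxj hxi | exact hBD x hxj hxi | exact hCD x hxj hxi

/-- Case 2: `N(v) ⊆ {u}` and `u` has a neighbor besides `v`. -/
lemma cover4_case2 (hfree : IsFreeGraph G) (hg : 5 ≤ G.girth) {u v : V} (hadj : G.Adj u v)
    (h2 : ∀ x, G.Adj v x → x = u) (hP1 : ∃ p, G.Adj u p ∧ p ≠ v) :
    ∃ Q : Fin 4 → Set V, (∀ i, IsFreeIndep G (Q i)) ∧
      (∀ i j, i ≠ j → ∀ x, x ∈ Q i → x ∉ Q j) ∧
      (∀ x, (x = u ∨ x = v ∨ G.Adj u x ∨ G.Adj v x) ↔ ∃ i, x ∈ Q i) := by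
  classical
  set P1 : Set V := {x | G.Adj u x ∧ x ≠ v} with hP1def
  have hP1ind : IsIndep G P1 := (nbhd_indep hg u).mono (fun x hx => hx.1)
  by_cases hz : ∃ p z, (G.Adj u p ∧ p ≠ v) ∧ G.Adj p z ∧ z ≠ u
  · obtain ⟨p, z, hp, hpz, hzu⟩ := hz
    have hpP1 : p ∈ P1 := hp
    have hzP1 : z ∉ P1 := fun hzp => no_tri hg hp.1 hpz (hzp.1.symm)
    refine ⟨![{u}, {v}, {p}, P1 \ {p}], ?_, ?_, ?_⟩
    · intro i
      fin_cases i
      · exact singleton_free hfree u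
      · exact singleton_free hfree v
      · exact singleton_free hfree p
      · refine free_of_outside_edge (hP1ind.mono Set.diff_subset) hpz ?_ ?_ ?_ ?_
        · simp
        · intro y hy hyp
          exact hP1ind hy.1 hpP1 hyp
        · intro hzd
          exact hzP1 hzd.1
        · intro y hy hyz
          exact no_c4 hg hp.1 hpz hyz.symm hy.1.1.symm hzu.symm (fun h => hy.2 h.symm)
    · refine disj4 ?_ ?_ ?_ ?_ ?_ ?_
      · rintro x rfl h
        exact hadj.ne h
      · rintro x rfl h
        exact hp.1.ne h
      · rintro x rfl h
        exact G.loopless.irrefl _ h.1.1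
      · rintro x rfl h
        exact hp.2 h.symm
      · rintro x rfl h
        exact h.1.2 rfl
      · rintro x rfl h
        exact h.2 rfl
    · intro x
      constructor
      · rintro (rfl | rfl | hx | hx)
        · exact ⟨0, rfl⟩
        · exact ⟨1, rfl⟩
        · by_cases hxv : x = v
          · exact ⟨1, hxv⟩
          · by_cases hxp : x = p
            · exact ⟨2, hxp⟩
            · exact ⟨3, ⟨hx, hxv⟩, hxp⟩
        · exact ⟨0, h2 x hx⟩
      · rintro ⟨i, hi⟩
        fin_cases i
        · exact Or.inl hi
        · exact Or.inr (Or.inl hi)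
        · exact Or.inr (Or.inr (Or.inl (hi ▸ hp.1)))
        · exact Or.inr (Or.inr (Or.inl hi.1.1))
  · push_neg at hz
    obtain ⟨p, hp⟩ := hP1
    have hSind : IsIndep G ({v} ∪ P1) := by
      intro a ha b hb hab
      rcases ha with rfl | ha <;> rcases hb with rfl | hb
      · exact G.loopless.irrefl _ hab
      · exact hb.1.ne' (h2 b hab)
      · exact ha.1.ne' (h2 a hab.symm)
      · exact hP1ind ha hb hab
    obtain ⟨a, b, hab, hau, hbu, hua, hub⟩ := exists_edge_outside hfree u
    have hnot : ∀ c, G.Adj c a ∨ G.Adj c b → c ∉ ({v} ∪ P1 : Set V) := by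
      rintro c hc (rfl | hcP)
      · rcases hc with h | h
        · exact hau (h2 a h)
        · exact hbu (h2 b h)
      · rcases hc with h | h
        · exact hau (hz c a ⟨hcP.1, hcP.2⟩ h)
        · exact hbu (hz c b ⟨hcP.1, hcP.2⟩ h)
    have haS : a ∉ ({v} ∪ P1 : Set V) := by
      rintro (rfl | haP)
      · exact hbu (h2 b hab)
      · exact hua haP.1
    have hbS : b ∉ ({v} ∪ P1 : Set V) := by
      rintro (rfl | hbP)
      · exact hau (h2 a hab.symm)
      · exact hub hbP.1
    refine ⟨![{u}, {v} ∪ P1, ∅, ∅], ?_, ?_, ?_⟩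
    · intro i
      fin_cases i
      · exact singleton_free hfree u
      · exact free_of_outside_edge hSind hab haS
          (fun x hx hxa => hnot x (Or.inl hxa) hx) hbS (fun x hx hxb => hnot x (Or.inr hxb) hx)
      · exact (singleton_free hfree u).mono (Set.empty_subset _)
      · exact (singleton_free hfree u).mono (Set.empty_subset _)
    · refine disj4 ?_ ?_ ?_ ?_ ?_ ?_
      · rintro x rfl (rfl | h)
        · exact hadj.ne rfl
        · exact G.loopless.irrefl _ h.1
      · exact fun x _ h => h
      · exact fun x _ h => h
      · exact fun x _ h => h
      · exact fun x _ h => h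
      · exact fun x h => h.elim
    · intro x
      constructor
      · rintro (rfl | rfl | hx | hx)
        · exact ⟨0, rfl⟩
        · exact ⟨1, Or.inl rfl⟩
        · by_cases hxv : x = v
          · exact ⟨1, Or.inl hxv⟩
          · exact ⟨1, Or.inr ⟨hx, hxv⟩⟩
        · exact ⟨0, h2 x hx⟩
      · rintro ⟨i, hi⟩
        fin_cases i
        · exact Or.inl hi
        · rcases hi with rfl | hi
          · exact Or.inr (Or.inl rfl)
          · exact Or.inr (Or.inr (Or.inl hi.1))
        · exact hi.elim
        · exact hi.elim

end Cover
section Cover2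

variable {G : SimpleGraph V}

lemma cover4 (hfree : IsFreeGraph G) (hg : 5 ≤ G.girth) {u v : V} (hadj : G.Adj u v) :
    ∃ Q : Fin 4 → Set V, (∀ i, IsFreeIndep G (Q i)) ∧
      (∀ i j, i ≠ j → ∀ x, x ∈ Q i → x ∉ Q j) ∧
      (∀ x, (x = u ∨ x = v ∨ G.Adj u x ∨ G.Adj v x) ↔ ∃ i, x ∈ Q i) := by
  classical
  by_cases hP1 : ∃ p, G.Adj u p ∧ p ≠ v
  · by_cases hP2 : ∃ q, G.Adj v q ∧ q ≠ u
    · -- Case 1: both nonempty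
      obtain ⟨p, hpu, hpv⟩ := hP1
      obtain ⟨q, hqv, hqu⟩ := hP2
      set P1 : Set V := {x | G.Adj u x ∧ x ≠ v} with hP1def
      set P2 : Set V := {x | G.Adj v x ∧ x ≠ u} with hP2def
      have hP1ind : IsIndep G P1 := (nbhd_indep hg u).mono (fun x hx => hx.1)
      have hP2ind : IsIndep G P2 := (nbhd_indep hg v).mono (fun x hx => hx.1)
      have hd12 : ∀ x, x ∈ P1 → x ∉ P2 := fun x hx1 hx2 =>
        no_tri hg hadj hx2.1 hx1.1.symm
      have hP1v : ∀ x ∈ P1, ¬ G.Adj x v := fun x hx hxv =>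
        no_tri hg hx.1 hxv hadj.symm
      have hP2u : ∀ x ∈ P2, ¬ G.Adj x u := fun x hx hxu =>
        no_tri hg hx.1 hxu hadj
      have hP1P2 : ∀ x ∈ P1, ∀ y ∈ P2, ¬ G.Adj x y := fun x hx y hy hxy =>
        no_c4 hg hx.1 hxy hy.1.symm hadj.symm (fun h => hy.2 h.symm) hx.2
      refine ⟨![{u}, {v}, P1, P2], ?_, ?_, ?_⟩
      · intro i
        fin_cases i
        · exact singleton_free hfree u
        · exact singleton_free hfree v
        · refine free_of_outside_edge hP1ind hqv (fun h => h.2 rfl) hP1v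
            (fun hq1 => hd12 q hq1 ⟨hqv, hqu⟩) (fun x hx hxq => hP1P2 x hx q ⟨hqv, hqu⟩ hxq)
        · refine free_of_outside_edge hP2ind hpu (fun h => h.2 rfl) hP2u
            (fun hp2 => hd12 p ⟨hpu, hpv⟩ hp2) (fun x hx hxp => hP1P2 p ⟨hpu, hpv⟩ x hx hxp.symm)
      · refine disj4 ?_ ?_ ?_ ?_ ?_ ?_
        · rintro x rfl h
          exact hadj.ne h
        · rintro x rfl h
          exact G.loopless.irrefl _ h.1
        · rintro x rfl h
          exact h.2 rfl
        · rintro x rfl h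
          exact h.2 rfl
        · rintro x rfl h
          exact G.loopless.irrefl _ h.1
        · exact fun x hx h => hd12 x hx h
      · intro x
        constructor
        · rintro (rfl | rfl | hx | hx)
          · exact ⟨0, rfl⟩
          · exact ⟨1, rfl⟩
          · by_cases hxv : x = v
            · exact ⟨1, hxv⟩
            · exact ⟨2, hx, hxv⟩
          · by_cases hxu : x = u
            · exact ⟨0, hxu⟩
            · exact ⟨3, hx, hxu⟩
        · rintro ⟨i, hi⟩
          fin_cases i
          · exact Or.inl hi
          · exact Or.inr (Or.inl hi)
          · exact Or.inr (Or.inr (Or.inl hi.1))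
          · exact Or.inr (Or.inr (Or.inr hi.1))
    · -- Case 2: P2 empty, P1 nonempty
      push_neg at hP2
      exact cover4_case2 hfree hg hadj hP2 hP1
  · by_cases hP2 : ∃ q, G.Adj v q ∧ q ≠ u
    · -- Case 3: P1 empty, P2 nonempty: swap
      push_neg at hP1
      obtain ⟨Q, hQf, hQd, hQc⟩ := cover4_case2 hfree hg hadj.symm hP1 hP2
      refine ⟨Q, hQf, hQd, fun x => ?_⟩
      rw [← hQc x]
      tauto
    · -- Case 4: both empty
      push_neg at hP1
      push_neg at hP2
      refine ⟨![{u}, {v}, ∅, ∅], ?_, ?_, ?_⟩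
      · intro i
        fin_cases i
        · exact singleton_free hfree u
        · exact singleton_free hfree v
        · exact (singleton_free hfree u).mono (Set.empty_subset _)
        · exact (singleton_free hfree u).mono (Set.empty_subset _)
      · refine disj4 ?_ ?_ ?_ ?_ ?_ ?_
        · rintro x rfl h
          exact hadj.ne h
        · exact fun x _ h => h
        · exact fun x _ h => h
        · exact fun x _ h => h
        · exact fun x _ h => h
        · exact fun x h => h.elim
      · intro x
        constructor
        · rintro (rfl | rfl | hx | hx)
          · exact ⟨0, rfl⟩
          · exact ⟨1, rfl⟩
          · exact ⟨1, hP1 x hx⟩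
          · exact ⟨0, hP2 x hx⟩
        · rintro ⟨i, hi⟩
          fin_cases i
          · exact Or.inl hi
          · exact Or.inr (Or.inl hi)
          · exact hi.elim
          · exact hi.elim

end Cover2
section Main

variable {G : SimpleGraph V}

lemma partition_of_cover {k : ℕ} (C : G.Coloring (Fin k)) {u v : V} (hadj : G.Adj u v)
    (Q : Fin 4 → Set V)
    (hQfree : ∀ i, IsFreeIndep G (Q i))
    (hQdisj : ∀ i j, i ≠ j → ∀ x, x ∈ Q i → x ∉ Q j)
    (hQcov : ∀ x, (x = u ∨ x = v ∨ G.Adj u x ∨ G.Adj v x) ↔ ∃ i, x ∈ Q i) :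
    FreePartition G (k + 4) := by
  classical
  set f : V → Fin (k + 4) := fun x =>
    if x ∈ Q 0 then ⟨k, by omega⟩ else if x ∈ Q 1 then ⟨k + 1, by omega⟩
    else if x ∈ Q 2 then ⟨k + 2, by omega⟩ else if x ∈ Q 3 then ⟨k + 3, by omega⟩
    else ⟨C x, by have := (C x).isLt; omega⟩ with hf
  have hfQ : ∀ x, ∀ m : Fin 4, x ∈ Q m → f x = ⟨k + m, by omega⟩ := by
    intro x m hx
    fin_cases m
    · have hx' : x ∈ Q 0 := hx
      simp [hf, hx']
    · have hx' : x ∈ Q 1 := hx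
      have h0 : x ∉ Q 0 := hQdisj 1 0 (by decide) x hx'
      simp [hf, hx', h0]
    · have hx' : x ∈ Q 2 := hx
      have h0 : x ∉ Q 0 := hQdisj 2 0 (by decide) x hx'
      have h1 : x ∉ Q 1 := hQdisj 2 1 (by decide) x hx'
      simp [hf, hx', h0, h1]
    · have hx' : x ∈ Q 3 := hx
      have h0 : x ∉ Q 0 := hQdisj 3 0 (by decide) x hx'
      have h1 : x ∉ Q 1 := hQdisj 3 1 (by decide) x hx'
      have h2 : x ∉ Q 2 := hQdisj 3 2 (by decide) x hx'
      simp [hf, hx', h0, h1, h2]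
  have hfC : ∀ x, (∀ m : Fin 4, x ∉ Q m) → f x = ⟨C x, by have := (C x).isLt; omega⟩ := by
    intro x hx
    simp [hf, hx 0, hx 1, hx 2, hx 3]
  have hdich : ∀ x, (∃ m : Fin 4, x ∈ Q m) ∨ ((∀ m : Fin 4, x ∉ Q m) ∧ (f x : ℕ) = C x) := by
    intro x
    by_cases hx : ∃ m : Fin 4, x ∈ Q m
    · exact Or.inl hx
    · push_neg at hx
      exact Or.inr ⟨hx, by rw [hfC x hx]⟩
  refine ⟨fun i => f ⁻¹' {i}, ?_, fun x =>
    ⟨f x, rfl, fun j hj => (Set.mem_singleton_iff.mp (Set.mem_preimage.mp hj)).symm⟩⟩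
  intro i
  show IsFreeIndep G (f ⁻¹' {i})
  by_cases hik : (i : ℕ) < k
  · -- low fiber: subset of a color class, disjoint from closed nbhd of u,v
    have hmem : ∀ x, x ∈ f ⁻¹' {i} → (∀ m : Fin 4, x ∉ Q m) ∧ (C x : ℕ) = (i : ℕ) := by
      intro x hx
      have hx' : f x = i := hx
      rcases hdich x with ⟨m, hm⟩ | ⟨hm, hc⟩
      · rw [hfQ x m hm] at hx'
        have : k + (m : ℕ) = (i : ℕ) := congrArg Fin.val hx'
        omega
      · exact ⟨hm, by rw [← hc, hx']⟩
    have hA : ∀ x, (x = u ∨ x = v ∨ G.Adj u x ∨ G.Adj v x) → x ∉ f ⁻¹' {i} := by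
      intro x hx hxf
      obtain ⟨m, hm⟩ := (hQcov x).mp hx
      exact (hmem x hxf).1 m hm
    refine free_of_outside_edge ?_ hadj (hA u (Or.inl rfl)) ?_ (hA v (Or.inr (Or.inl rfl))) ?_
    · intro a ha b hb hab
      have hca : (C a : ℕ) = (i : ℕ) := (hmem a ha).2
      have hcb : (C b : ℕ) = (i : ℕ) := (hmem b hb).2
      exact C.valid hab (Fin.ext (hca.trans hcb.symm))
    · exact fun x hx hxu => hA x (Or.inr (Or.inr (Or.inl hxu.symm))) hx
    · exact fun x hx hxv => hA x (Or.inr (Or.inr (Or.inr hxv.symm))) hx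
  · -- high fiber: equals Q m
    have hm4 : (i : ℕ) - k < 4 := by have := i.isLt; omega
    have hQm : f ⁻¹' {i} = Q ⟨(i : ℕ) - k, hm4⟩ := by
      ext x
      simp only [Set.mem_preimage, Set.mem_singleton_iff]
      constructor
      · intro hx
        rcases hdich x with ⟨m, hm⟩ | ⟨_, hc⟩
        · have h1 := hfQ x m hm
          rw [hx] at h1
          have h2 : (i : ℕ) = k + (m : ℕ) := congrArg Fin.val h1
          have : (⟨(i : ℕ) - k, hm4⟩ : Fin 4) = m := Fin.ext (by simp; omega)
          rwa [this]
        · have := (C x).isLt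
          omega
      · intro hx
        rw [hfQ x _ hx]
        exact Fin.ext (by simp; omega)
    rw [hQm]
    exact hQfree _

theorem stmt6' {V : Type*} [Fintype V] (G : SimpleGraph V) (hfree : IsFreeGraph G)
    (hg : 5 ≤ G.girth) :
    freeChrom G ≤ ((chromNum G + 4 : ℕ) : ℕ∞) := by
  classical
  cases isEmpty_or_nonempty V with
  | inl hV =>
    have h0 : FreePartition G 0 :=
      ⟨fun i => (Fin.elim0 i : Set V), fun i => Fin.elim0 i, fun x => isEmptyElim x⟩
    calc freeChrom G ≤ ((0 : ℕ) : ℕ∞) := sInf_le ⟨0, rfl, h0⟩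
      _ ≤ _ := by simp
  | inr hV =>
    have hedge : ∃ u v, G.Adj u v := by
      by_contra h
      push_neg at h
      obtain ⟨v0⟩ := hV
      obtain ⟨F, ⟨_, M1, M2, hM1, hM2, hne, _, _⟩, _⟩ := hfree v0
      have huniv : ∀ M : Set V, IsMaxIndep G M → M = Set.univ := fun M hM =>
        hM.2 Set.univ (fun a _ b _ hab => h a b hab) (Set.subset_univ M)
      exact hne ((huniv M1 hM1).trans (huniv M2 hM2).symm)
    obtain ⟨u, v, hadj⟩ := hedge
    obtain ⟨Q, hQfree, hQdisj, hQcov⟩ := cover4 hfree hg hadj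
    have hcol : G.Colorable (chromNum G) := by
      have : Nonempty {k : ℕ | G.Colorable k} := ⟨Fintype.card V, G.colorable_of_fintype⟩
      exact Nat.sInf_mem (Set.nonempty_coe_sort.mp this)
    obtain ⟨C⟩ := hcol
    exact sInf_le ⟨chromNum G + 4, rfl, partition_of_cover C hadj Q hQfree hQdisj hQcov⟩

end Main

/-- if `G` is a free graph with girth at least `5`, then `φ(G) ≤ χ(G) + 4`. -/
theorem stmt6 {V : Type*} [Fintype V] (G : SimpleGraph V) (hfree : IsFreeGraph G)
    (hg : 5 ≤ G.girth) :
    freeChrom G ≤ ((chromNum G + 4 : ℕ) : ℕ∞) :=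
  stmt6' G hfree hg
end

section
/- If G is a finite free graph with girth at least 7, then φ(G) ≤ χ(G) + 2. -/
open SimpleGraph

variable {V : Type*} {W : Type*}

section FreeAux

variable {V : Type*} {G : SimpleGraph V}

open SimpleGraph

private lemma egirth_ge7 (hg : 7 ≤ G.girth) : (7 : ℕ∞) ≤ G.egirth := by
  by_cases h : G.egirth = ⊤
  · simp [h]
  · have := ENat.coe_toNat h
    rw [← this]
    exact_mod_cast hg

private lemma noC3 (hg : 7 ≤ G.girth) {a b c : V} (h1 : G.Adj a b) (h2 : G.Adj b c)
    (h3 : G.Adj c a) : False := by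
  have hc : (Walk.cons h1 (Walk.cons h2 (Walk.cons h3 Walk.nil))).IsCycle := by
    simp_all [Walk.isCycle_def, Walk.isTrail_def, h1.ne, h2.ne, h3.ne, h1.ne', h2.ne', h3.ne',
      Ne.symm]
  have h7 := (le_egirth.mp (egirth_ge7 hg)) a _ hc
  rw [show (Walk.cons h1 (Walk.cons h2 (Walk.cons h3 Walk.nil))).length = 3 by simp] at h7
  norm_num at h7

private lemma noC4 (hg : 7 ≤ G.girth) {a b c d : V} (h1 : G.Adj a b) (h2 : G.Adj b c)
    (h3 : G.Adj c d) (h4 : G.Adj d a) (n1 : a ≠ c) (n2 : b ≠ d) : False := by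
  have hc : (Walk.cons h1 (Walk.cons h2 (Walk.cons h3 (Walk.cons h4 Walk.nil)))).IsCycle := by
    simp_all [Walk.isCycle_def, Walk.isTrail_def, h1.ne, h2.ne, h3.ne, h4.ne,
      h1.ne', h2.ne', h3.ne', h4.ne', Ne.symm]
  have h7 := (le_egirth.mp (egirth_ge7 hg)) a _ hc
  rw [show (Walk.cons h1 (Walk.cons h2 (Walk.cons h3 (Walk.cons h4 Walk.nil)))).length = 4
    by simp] at h7
  norm_num at h7

private lemma noC5 (hg : 7 ≤ G.girth) {a b c d e : V} (h1 : G.Adj a b) (h2 : G.Adj b c)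
    (h3 : G.Adj c d) (h4 : G.Adj d e) (h5 : G.Adj e a)
    (n1 : a ≠ c) (n2 : a ≠ d) (n3 : b ≠ d) (n4 : b ≠ e) (n5 : c ≠ e) : False := by
  have hc : (Walk.cons h1 (Walk.cons h2 (Walk.cons h3 (Walk.cons h4
      (Walk.cons h5 Walk.nil))))).IsCycle := by
    simp_all [Walk.isCycle_def, Walk.isTrail_def, h1.ne, h2.ne, h3.ne, h4.ne, h5.ne,
      h1.ne', h2.ne', h3.ne', h4.ne', h5.ne', Ne.symm]
  have h7 := (le_egirth.mp (egirth_ge7 hg)) a _ hc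
  rw [show (Walk.cons h1 (Walk.cons h2 (Walk.cons h3 (Walk.cons h4
      (Walk.cons h5 Walk.nil))))).length = 5 by simp] at h7
  norm_num at h7

private lemma noC6 (hg : 7 ≤ G.girth) {a b c d e f : V} (h1 : G.Adj a b) (h2 : G.Adj b c)
    (h3 : G.Adj c d) (h4 : G.Adj d e) (h5 : G.Adj e f) (h6 : G.Adj f a)
    (n1 : a ≠ c) (n2 : a ≠ d) (n3 : a ≠ e) (n4 : b ≠ d) (n5 : b ≠ e) (n6 : b ≠ f)
    (n7 : c ≠ e) (n8 : c ≠ f) (n9 : d ≠ f) : False := by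
  have hc : (Walk.cons h1 (Walk.cons h2 (Walk.cons h3 (Walk.cons h4 (Walk.cons h5
      (Walk.cons h6 Walk.nil)))))).IsCycle := by
    simp_all [Walk.isCycle_def, Walk.isTrail_def, h1.ne, h2.ne, h3.ne, h4.ne, h5.ne, h6.ne,
      h1.ne', h2.ne', h3.ne', h4.ne', h5.ne', h6.ne', Ne.symm]
  have h7 := (le_egirth.mp (egirth_ge7 hg)) a _ hc
  rw [show (Walk.cons h1 (Walk.cons h2 (Walk.cons h3 (Walk.cons h4 (Walk.cons h5
      (Walk.cons h6 Walk.nil)))))).length = 6 by simp] at h7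
  norm_num at h7

/-- `x` is within distance 2 of `v`. -/
private def Near2 (G : SimpleGraph V) (v x : V) : Prop :=
  x = v ∨ G.Adj v x ∨ ∃ z, G.Adj v z ∧ G.Adj z x

/-- `v` is good: there is an edge both of whose endpoints are at distance at least 3
from `v`. -/
private def GoodV (G : SimpleGraph V) (v : V) : Prop :=
  ∃ p q, G.Adj p q ∧ ¬ Near2 G v p ∧ ¬ Near2 G v q

/-- Every independent set extends to a maximal one (finite case). -/
private lemma exists_maxIndep [Fintype V] {S : Set V} (hS : IsIndep G S) :
    ∃ M, IsMaxIndep G M ∧ S ⊆ M := by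
  classical
  obtain ⟨M, hM, hmax⟩ := Set.Finite.exists_maximalFor (id : Set V → Set V)
    {t : Set V | IsIndep G t ∧ S ⊆ t} (Set.toFinite _) ⟨S, hS, subset_rfl⟩
  refine ⟨M, ⟨hM.1, fun t ht hsub => ?_⟩, hM.2⟩
  exact Set.Subset.antisymm hsub (hmax ⟨ht, hM.2.trans hsub⟩ hsub)

/-- Criterion for a set to be a free independent set. -/
private lemma freeCrit [Fintype V] {S : Set V} {p q : V} (hS : IsIndep G S) (hpq : G.Adj p q)
    (hfar : ∀ f ∈ S, f ≠ p ∧ ¬ G.Adj f p ∧ f ≠ q ∧ ¬ G.Adj f q) : IsFreeIndep G S := by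
  have hip : IsIndep G (insert p S) := by
    intro u hu w hw hadj
    rcases hu with rfl | hu <;> rcases hw with rfl | hw
    · exact G.loopless.irrefl _ hadj
    · exact (hfar w hw).2.1 hadj.symm
    · exact (hfar u hu).2.1 hadj
    · exact hS hu hw hadj
  have hiq : IsIndep G (insert q S) := by
    intro u hu w hw hadj
    rcases hu with rfl | hu <;> rcases hw with rfl | hw
    · exact G.loopless.irrefl _ hadj
    · exact (hfar w hw).2.2.2 hadj.symm
    · exact (hfar u hu).2.2.2 hadj
    · exact hS hu hw hadj
  obtain ⟨M₁, hM₁, hsub₁⟩ := exists_maxIndep hip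
  obtain ⟨M₂, hM₂, hsub₂⟩ := exists_maxIndep hiq
  refine ⟨hS, M₁, M₂, hM₁, hM₂, ?_, ?_, ?_⟩
  · intro h
    subst h
    exact hM₁.1 (hsub₁ (Set.mem_insert _ _)) (hsub₂ (Set.mem_insert _ _)) hpq
  · exact (Set.subset_insert _ _).trans hsub₁
  · exact (Set.subset_insert _ _).trans hsub₂

private lemma aux_edge {M₁ M₂ F : Set V} {u v : V} (h₁ : IsMaxIndep G M₁) (h₂ : IsMaxIndep G M₂)
    (hu1 : u ∈ M₁) (hu2 : u ∉ M₂) (hFM₁ : F ⊆ M₁) (hFM₂ : F ⊆ M₂) (hv : v ∈ F) :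
    ∃ p q, G.Adj p q ∧ p ≠ v ∧ ¬ G.Adj v p ∧ q ≠ v ∧ ¬ G.Adj v q := by
  have hni : ¬ IsIndep G (insert u M₂) := by
    intro hI
    exact hu2 ((h₂.2 _ hI (Set.subset_insert _ _)) ▸ Set.mem_insert _ _)
  have hex : ∃ c ∈ insert u M₂, ∃ d ∈ insert u M₂, G.Adj c d := by
    by_contra hno
    push_neg at hno
    exact hni fun c hc d hd hadj => hno c hc d hd hadj
  obtain ⟨c, hc, d, hd, hcd⟩ := hex
  have hz : ∃ z ∈ M₂, G.Adj u z := by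
    rcases hc with rfl | hc <;> rcases hd with rfl | hd
    · exact absurd hcd (G.loopless.irrefl _)
    · exact ⟨d, hd, hcd⟩
    · exact ⟨c, hc, hcd.symm⟩
    · exact absurd hcd (h₂.1 hc hd)
  obtain ⟨z, hzM, huz⟩ := hz
  refine ⟨u, z, huz, ?_, ?_, ?_, ?_⟩
  · rintro rfl; exact hu2 (hFM₂ hv)
  · exact fun h => h₁.1 (hFM₁ hv) hu1 h
  · rintro rfl; exact h₁.1 (hFM₁ hv) hu1 huz.symm
  · exact fun h => h₂.1 (hFM₂ hv) hzM h

/-- From freeness of the graph: around every vertex there is an edge avoiding its closed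
neighborhood. -/
private lemma freeSingle (hfree : IsFreeGraph G) (v : V) :
    ∃ p q, G.Adj p q ∧ p ≠ v ∧ ¬ G.Adj v p ∧ q ≠ v ∧ ¬ G.Adj v q := by
  obtain ⟨F, ⟨hind, M₁, M₂, h₁, h₂, hne, hs₁, hs₂⟩, hvF⟩ := hfree v
  have : (∃ u, u ∈ M₁ ∧ u ∉ M₂) ∨ (∃ u, u ∈ M₂ ∧ u ∉ M₁) := by
    by_contra h
    push_neg at h
    exact hne (Set.Subset.antisymm (fun x hx => h.1 x hx) (fun x hx => h.2 x hx))
  rcases this with ⟨u, hu1, hu2⟩ | ⟨u, hu1, hu2⟩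
  · exact aux_edge h₁ h₂ hu1 hu2 hs₁ hs₂ hvF
  · exact aux_edge h₂ h₁ hu1 hu2 hs₂ hs₁ hvF

/-- The key structural lemma: in a free graph of girth at least 7 with an edge, some edge
has both endpoints good. -/
private lemma exists_goodgood (hg : 7 ≤ G.girth)
    (hfs : ∀ v : V, ∃ p q, G.Adj p q ∧ p ≠ v ∧ ¬ G.Adj v p ∧ q ≠ v ∧ ¬ G.Adj v q)
    {u₀ w₀ : V} (he : G.Adj u₀ w₀) :
    ∃ a b, G.Adj a b ∧ GoodV G a ∧ GoodV G b := by
  by_contra hcon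
  push_neg at hcon
  -- find a bad vertex v
  have hbadv : ∃ v : V, ¬ GoodV G v := by
    by_cases h : GoodV G u₀
    · exact ⟨w₀, hcon u₀ w₀ he h⟩
    · exact ⟨u₀, h⟩
  obtain ⟨v, hv⟩ := hbadv
  have bad : ∀ {p q : V}, G.Adj p q → Near2 G v p ∨ Near2 G v q := by
    intro p q h
    by_contra h'
    push_neg at h'
    exact hv ⟨p, q, h, h'.1, h'.2⟩
  -- Step 1 : a branch v - a - x - c with c at distance ≥ 3 from v
  have K1 : ∀ p q : V, G.Adj p q → p ≠ v → ¬ G.Adj v p → q ≠ v → ¬ G.Adj v q →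
      Near2 G v p →
      ∃ a, G.Adj v a ∧ G.Adj a p ∧ (∀ z, ¬ (G.Adj v z ∧ G.Adj z q)) := by
    intro p q hpq hpv hvp hqv hvq hN
    rcases hN with rfl | h | ⟨a, hva, hap⟩
    · exact absurd rfl hpv
    · exact absurd h hvp
    · refine ⟨a, hva, hap, ?_⟩
      rintro z ⟨hvz, hzq⟩
      by_cases hza : z = a
      · subst hza
        exact noC3 hg hap hpq hzq.symm
      · refine noC5 hg hva hap hpq hzq.symm hvz.symm (Ne.symm hpv) (Ne.symm hqv) ?_
          (fun h => hza h.symm) ?_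
        · rintro rfl; exact hvq hva
        · rintro rfl; exact hvp hvz

  obtain ⟨p₀, q₀, hpq₀, hpv₀, hvp₀, hqv₀, hvq₀⟩ := hfs v
  have step1 : ∃ a x c, G.Adj v a ∧ G.Adj a x ∧ G.Adj x c ∧ x ≠ v ∧ ¬ G.Adj v x ∧
      c ≠ v ∧ ¬ G.Adj v c ∧ (∀ z, ¬ (G.Adj v z ∧ G.Adj z c)) := by
    rcases bad hpq₀ with hN | hN
    · obtain ⟨a, hva, hap, hfar⟩ := K1 p₀ q₀ hpq₀ hpv₀ hvp₀ hqv₀ hvq₀ hN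
      exact ⟨a, p₀, q₀, hva, hap, hpq₀, hpv₀, hvp₀, hqv₀, hvq₀, hfar⟩
    · obtain ⟨a, hva, hap, hfar⟩ := K1 q₀ p₀ hpq₀.symm hqv₀ hvq₀ hpv₀ hvp₀ hN
      exact ⟨a, q₀, p₀, hva, hap, hpq₀.symm, hqv₀, hvq₀, hpv₀, hvp₀, hfar⟩
  obtain ⟨a, x, c, hva, hax, hxc, hxv, hvx, hcv, hvc, hfc⟩ := step1
  -- Step 2 : a second branch v - b - y with b ≠ a and y not adjacent to a
  have K2 : ∀ s t : V, G.Adj s t → s ≠ a → ¬ G.Adj a s → t ≠ a → ¬ G.Adj a t →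
      Near2 G v s →
      ∃ b y, G.Adj v b ∧ G.Adj b y ∧ b ≠ a ∧ ¬ G.Adj v y ∧ y ≠ v ∧ y ≠ a ∧ ¬ G.Adj a y := by
    intro s t hst hsa has hta hat hN
    rcases hN with rfl | h | ⟨b, hvb, hbs⟩
    · exact absurd hva.symm has
    · -- s is adjacent to v ; use b := s, y := t
      refine ⟨s, t, h, hst, hsa, ?_, ?_, hta, hat⟩
      · intro hvt
        exact noC3 hg h hst hvt.symm
      · rintro rfl
        exact hat hva.symm
    · -- s is at distance two from v via b
      have hbneqa : b ≠ a := by rintro rfl; exact has hbs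
      have hsv : s ≠ v := by rintro rfl; exact has hva.symm
      have hvs : ¬ G.Adj v s := fun h' => noC3 hg hvb hbs h'.symm
      exact ⟨b, s, hvb, hbs, hbneqa, hvs, hsv, hsa, has⟩
  obtain ⟨s₀, t₀, hst₀, hsa₀, has₀, hta₀, hat₀⟩ := hfs a
  have step2 : ∃ b y, G.Adj v b ∧ G.Adj b y ∧ b ≠ a ∧ ¬ G.Adj v y ∧ y ≠ v ∧ y ≠ a ∧
      ¬ G.Adj a y := by
    rcases bad hst₀ with hN | hN
    · exact K2 s₀ t₀ hst₀ hsa₀ has₀ hta₀ hat₀ hN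
    · exact K2 t₀ s₀ hst₀.symm hta₀ hat₀ hsa₀ has₀ hN
  obtain ⟨b, y, hvb, hby, hba, hvy, hyv, hya, hay⟩ := step2
  -- basic derived facts
  have hab : ¬ G.Adj a b := fun h => noC3 hg hva h hvb.symm
  have hbx : b ≠ x := by rintro rfl; exact hvx hvb
  have hxb : ¬ G.Adj x b := fun h => noC4 hg hva hax h hvb.symm (Ne.symm hxv) hba.symm
  have hvnex : v ≠ x := Ne.symm hxv
  have hanb : a ≠ b := Ne.symm hba
  -- Step 3 : the edge x-c has both endpoints good
  have goodx : GoodV G x := by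
    refine ⟨b, y, hby, ?_, ?_⟩
    · rintro (rfl | hadj | ⟨z, hxz, hzb⟩)
      · exact hvx hvb
      · exact noC4 hg hva hax hadj hvb.symm hvnex hanb
      · refine noC5 hg hva hax hxz hzb hvb.symm hvnex ?_ ?_ hanb hbx.symm
        · rintro rfl; exact hvx hxz.symm
        · rintro rfl; exact hab hzb
    · rintro (rfl | hadj | ⟨z, hxz, hzy⟩)
      · exact hay hax
      · exact noC5 hg hva hax hadj hby.symm hvb.symm hvnex (Ne.symm hyv) (Ne.symm hya) hanb
          hbx.symm
      · refine noC6 hg hva hax hxz hzy hby.symm hvb.symm hvnex ?_ (Ne.symm hyv) ?_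
          (Ne.symm hya) hanb ?_ hbx.symm ?_
        · rintro rfl; exact hvx hxz.symm
        · rintro rfl; exact hay hzy
        · rintro rfl; exact hay hax
        · rintro rfl; exact hxb hxz
  have goodc : GoodV G c := by
    refine ⟨v, b, hvb, ?_, ?_⟩
    · rintro (rfl | hadj | ⟨z, hcz, hzv⟩)
      · exact hcv rfl
      · exact hvc hadj.symm
      · exact hfc z ⟨hzv.symm, hcz.symm⟩
    · rintro (rfl | hadj | ⟨z, hcz, hzb⟩)
      · exact hvc hvb
      · exact hfc b ⟨hvb, hadj.symm⟩
      · refine noC6 hg hva hax hxc hcz hzb hvb.symm hvnex (Ne.symm hcv) ?_ ?_ ?_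
          hanb ?_ ?_ ?_
        · rintro rfl; exact hvc hcz.symm
        · rintro rfl; exact hvc hva
        · rintro rfl; exact hfc a ⟨hva, hcz.symm⟩
        · rintro rfl; exact hxb hzb
        · rintro rfl; exact hvx hvb
        · rintro rfl; exact hvc hvb
  exact hcon x c hxc goodx goodc

end FreeAux

/-- if `G` is a free graph with girth at least `7`, then `φ(G) ≤ χ(G) + 2`. -/
theorem stmt7 {V : Type*} [Fintype V] (G : SimpleGraph V) (hfree : IsFreeGraph G)
    (hg : 7 ≤ G.girth) :
    freeChrom G ≤ ((chromNum G + 2 : ℕ) : ℕ∞) := by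
  classical
  by_cases hE : ∃ u w : V, G.Adj u w
  · obtain ⟨u₀, w₀, he⟩ := hE
    set k := chromNum G with hk
    have hcol : G.Colorable k := by
      have hmem : Fintype.card V ∈ {n : ℕ | G.Colorable n} := G.colorable_of_fintype
      exact Nat.sInf_mem ⟨_, hmem⟩
    obtain ⟨C⟩ := hcol
    obtain ⟨a, b, hab, ⟨p₁, q₁, hp₁q₁, hfa₁, hfa₂⟩, ⟨p₂, q₂, hp₂q₂, hfb₁, hfb₂⟩⟩ :=
      exists_goodgood hg (freeSingle hfree) he
    let P : Fin (k + 2) → Set V := fun i =>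
      if i.1 = k then {u | G.Adj a u}
      else if i.1 = k + 1 then {u | G.Adj b u ∧ ¬ G.Adj a u}
      else {u | ¬ G.Adj a u ∧ ¬ G.Adj b u ∧ ((C u : ℕ) = i.1)}
    have hP1 : ∀ i : Fin (k + 2), i.1 = k → P i = {u | G.Adj a u} := by
      intro i h; simp only [P]; rw [if_pos h]
    have hP2 : ∀ i : Fin (k + 2), i.1 = k + 1 → P i = {u | G.Adj b u ∧ ¬ G.Adj a u} := by
      intro i h; simp only [P]; rw [if_neg (by omega), if_pos h]
    have hP3 : ∀ i : Fin (k + 2), i.1 ≠ k → i.1 ≠ k + 1 →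
        P i = {u | ¬ G.Adj a u ∧ ¬ G.Adj b u ∧ ((C u : ℕ) = i.1)} := by
      intro i h1 h2; simp only [P]; rw [if_neg h1, if_neg h2]
    have hfreeP : ∀ i, IsFreeIndep G (P i) := by
      intro i
      by_cases h1 : i.1 = k
      · rw [hP1 i h1]
        refine freeCrit ?_ hp₁q₁ ?_
        · intro u hu w hw hadj
          exact noC3 hg hu hadj hw.symm
        · intro f hf
          refine ⟨?_, ?_, ?_, ?_⟩
          · rintro rfl; exact hfa₁ (Or.inr (Or.inl hf))
          · exact fun h => hfa₁ (Or.inr (Or.inr ⟨f, hf, h⟩))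
          · rintro rfl; exact hfa₂ (Or.inr (Or.inl hf))
          · exact fun h => hfa₂ (Or.inr (Or.inr ⟨f, hf, h⟩))
      · by_cases h2 : i.1 = k + 1
        · rw [hP2 i h2]
          refine freeCrit ?_ hp₂q₂ ?_
          · intro u hu w hw hadj
            exact noC3 hg hu.1 hadj hw.1.symm
          · intro f hf
            refine ⟨?_, ?_, ?_, ?_⟩
            · rintro rfl; exact hfb₁ (Or.inr (Or.inl hf.1))
            · exact fun h => hfb₁ (Or.inr (Or.inr ⟨f, hf.1, h⟩))
            · rintro rfl; exact hfb₂ (Or.inr (Or.inl hf.1))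
            · exact fun h => hfb₂ (Or.inr (Or.inr ⟨f, hf.1, h⟩))
        · rw [hP3 i h1 h2]
          refine freeCrit ?_ hab ?_
          · intro u hu w hw hadj
            exact C.valid hadj (Fin.ext (hu.2.2.trans hw.2.2.symm))
          · intro f hf
            refine ⟨?_, fun h => hf.1 h.symm, ?_, fun h => hf.2.1 h.symm⟩
            · rintro rfl; exact hf.2.1 hab.symm
            · rintro rfl; exact hf.1 hab
    have hcover : ∀ v : V, ∃! i, v ∈ P i := by
      intro v
      by_cases hav : G.Adj a v
      · refine ⟨⟨k, by omega⟩, ?_, ?_⟩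
        · show v ∈ P _
          rw [hP1 _ rfl]; exact hav
        · intro j hj
          by_cases h1 : j.1 = k
          · exact Fin.ext h1
          · by_cases h2 : j.1 = k + 1
            · rw [hP2 _ h2] at hj; exact absurd hav hj.2
            · rw [hP3 _ h1 h2] at hj; exact absurd hav hj.1
      · by_cases hbv : G.Adj b v
        · refine ⟨⟨k + 1, by omega⟩, ?_, ?_⟩
          · show v ∈ P _
            rw [hP2 _ rfl]; exact ⟨hbv, hav⟩
          · intro j hj
            by_cases h1 : j.1 = k
            · rw [hP1 _ h1] at hj; exact absurd hj hav
            · by_cases h2 : j.1 = k + 1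
              · exact Fin.ext h2
              · rw [hP3 _ h1 h2] at hj; exact absurd hbv hj.2.1
        · refine ⟨⟨(C v : ℕ), by have := (C v).isLt; omega⟩, ?_, ?_⟩
          · show v ∈ P _
            rw [hP3]
            · exact ⟨hav, hbv, rfl⟩
            · have := (C v).isLt; simp; omega
            · have := (C v).isLt; simp; omega
          · intro j hj
            by_cases h1 : j.1 = k
            · rw [hP1 _ h1] at hj; exact absurd hj hav
            · by_cases h2 : j.1 = k + 1
              · rw [hP2 _ h2] at hj; exact absurd hj.1 hbv
              · rw [hP3 _ h1 h2] at hj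
                exact Fin.ext hj.2.2.symm
    exact sInf_le ⟨k + 2, rfl, P, hfreeP, hcover⟩
  · cases isEmpty_or_nonempty V with
    | inl h =>
      have h0 : FreePartition G 0 :=
        ⟨fun i => i.elim0, fun i => i.elim0, fun v => isEmptyElim v⟩
      have hle : freeChrom G ≤ ((0 : ℕ) : ℕ∞) := sInf_le ⟨0, rfl, h0⟩
      exact hle.trans (by simp)
    | inr h =>
      exfalso
      obtain ⟨F, ⟨hind, M₁, M₂, h₁, h₂, hne, _, _⟩, _⟩ := hfree (Classical.arbitrary V)
      push_neg at hE
      have hi : ∀ s : Set V, IsIndep G s := fun s u _ w _ hadj => hE u w hadj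
      exact hne ((h₁.2 Set.univ (hi _) (Set.subset_univ _)).trans
        (h₂.2 Set.univ (hi _) (Set.subset_univ _)).symm)
end

section
/- For any finite graph G and integers a ≥ 0, b ≥ 1, φ^a_b(M(G)) ≥ φ^{a+b}_{2b}(G), where M(G) is the Mycielskian of G. Consequently, for any positive integer t, φ^0_2(M^t(G)) ≥ φ^{2^{t+1}−2}_{2^{t+1}}(G). -/
open SimpleGraph

variable {V : Type*} {W : Type*}

section Aux

/-- Every independent set extends to a maximal independent set (Zorn). -/
lemma exists_maxIndep_superset (G : SimpleGraph V) {s : Set V} (hs : IsIndep G s) :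
    ∃ M, s ⊆ M ∧ IsMaxIndep G M := by
  have hchainub : ∀ c ⊆ {t : Set V | IsIndep G t}, IsChain (· ⊆ ·) c → c.Nonempty →
      ∃ ub ∈ {t : Set V | IsIndep G t}, ∀ s ∈ c, s ⊆ ub := by
    intro c hcS hchain hne
    refine ⟨⋃₀ c, ?_, fun s hs => Set.subset_sUnion_of_mem hs⟩
    intro u hu v hv hadj
    obtain ⟨s₁, hs₁c, hu1⟩ := Set.mem_sUnion.mp hu
    obtain ⟨s₂, hs₂c, hv2⟩ := Set.mem_sUnion.mp hv
    by_cases heq : s₁ = s₂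
    · subst heq; exact hcS hs₁c hu1 hv2 hadj
    · rcases hchain hs₁c hs₂c heq with h | h
      · exact hcS hs₂c (h hu1) hv2 hadj
      · exact hcS hs₁c hu1 (h hv2) hadj
  obtain ⟨M, hsM, hmax⟩ := zorn_subset_nonempty {t : Set V | IsIndep G t} hchainub s hs
  exact ⟨M, hsM, hmax.1, fun t ht hMt => subset_antisymm hMt (hmax.2 ht hMt)⟩

/-- A supported independent set is free. -/
lemma isFreeIndep_of_support (G : SimpleGraph V) {F : Set V} (hF : IsIndep G F)
    {u v : V} (huv : G.Adj u v)
    (hsup : (G.neighborSet u ∪ G.neighborSet v) ∩ F = ∅) : IsFreeIndep G F := by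
  have hnb : ∀ w ∈ F, ¬ G.Adj u w ∧ ¬ G.Adj v w := by
    intro w hw
    constructor
    · intro hadj
      have hmem : w ∈ (G.neighborSet u ∪ G.neighborSet v) ∩ F := ⟨Or.inl hadj, hw⟩
      rw [hsup] at hmem; exact hmem
    · intro hadj
      have hmem : w ∈ (G.neighborSet u ∪ G.neighborSet v) ∩ F := ⟨Or.inr hadj, hw⟩
      rw [hsup] at hmem; exact hmem
  have hu : IsIndep G (F ∪ {u}) := by
    rintro x (hx | hx) y (hy | hy) hadj
    · exact hF hx hy hadj
    · rw [Set.mem_singleton_iff] at hy; subst hy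
      exact (hnb x hx).1 hadj.symm
    · rw [Set.mem_singleton_iff] at hx; subst hx
      exact (hnb y hy).1 hadj
    · rw [Set.mem_singleton_iff] at hx hy; subst hx; subst hy
      exact G.loopless.irrefl _ hadj
  have hv : IsIndep G (F ∪ {v}) := by
    rintro x (hx | hx) y (hy | hy) hadj
    · exact hF hx hy hadj
    · rw [Set.mem_singleton_iff] at hy; subst hy
      exact (hnb x hx).2 hadj.symm
    · rw [Set.mem_singleton_iff] at hx; subst hx
      exact (hnb y hy).2 hadj
    · rw [Set.mem_singleton_iff] at hx hy; subst hx; subst hy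
      exact G.loopless.irrefl _ hadj
  obtain ⟨M₁, hM₁s, hM₁⟩ := exists_maxIndep_superset G hu
  obtain ⟨M₂, hM₂s, hM₂⟩ := exists_maxIndep_superset G hv
  have huM₁ : u ∈ M₁ := hM₁s (Or.inr rfl)
  have hvM₂ : v ∈ M₂ := hM₂s (Or.inr rfl)
  have hne : M₁ ≠ M₂ := by
    intro h; subst h
    exact hM₁.1 huM₁ hvM₂ huv
  exact ⟨hF, M₁, M₂, hM₁, hM₂, hne,
    fun x hx => hM₁s (Or.inl hx), fun x hx => hM₂s (Or.inl hx)⟩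

/-- Any injection `Fin m ↪ Fin n` can be carried to any other by a permutation. -/
lemma exists_perm_extend {n m : ℕ} (f g : Fin m ↪ Fin n) :
    ∃ σ : Equiv.Perm (Fin n), ∀ j, σ (f j) = g j := by
  classical
  have hcard : Fintype.card {x // ¬ x ∈ Set.range ⇑f} =
      Fintype.card {x // ¬ x ∈ Set.range ⇑g} := by
    rw [Fintype.card_subtype_compl, Fintype.card_subtype_compl,
        Set.card_range_of_injective f.injective, Set.card_range_of_injective g.injective]
  let ef : Fin m ≃ Set.range ⇑f := Equiv.ofInjective ⇑f f.injective
  let eg : Fin m ≃ Set.range ⇑g := Equiv.ofInjective ⇑g g.injective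
  let c : {x // ¬ x ∈ Set.range ⇑f} ≃ {x // ¬ x ∈ Set.range ⇑g} := Fintype.equivOfCardEq hcard
  refine ⟨((Equiv.sumCompl (· ∈ Set.range ⇑f)).symm.trans
    ((Equiv.sumCongr (ef.symm.trans eg) c).trans (Equiv.sumCompl (· ∈ Set.range ⇑g)))), ?_⟩
  intro j
  simp only [Equiv.trans_apply]
  rw [Equiv.sumCompl_symm_apply_of_pos (p := fun x => x ∈ Set.range ⇑f) (a := f j) ⟨j, rfl⟩]
  simp only [Equiv.sumCongr_apply, Sum.map_inl, Equiv.trans_apply]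
  rw [show (⟨f j, ⟨j, rfl⟩⟩ : Set.range ⇑f) = ef j from rfl, Equiv.symm_apply_apply]
  simp [eg, Equiv.ofInjective_apply]

/-- The key transfer: an `(a,b)`-free coloring of `M(G)` with `n` colors yields an
`(a+b,2b)`-free coloring of `G` with `n` colors. -/
lemma abfree_of_myc (G : SimpleGraph V) (a b n : ℕ)
    (h : ABFree (mycielskian G) a b n) : ABFree G (a + b) (2 * b) n := by
  classical
  obtain ⟨P, e, hcov, hind, hfree, hsupp, hb⟩ := h
  -- bad indices: support edges through `z = none`
  set BadS : Set (Fin (n - a)) :=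
    {i | (none : Option (V ⊕ V)) = (e i).1 ∨ (none : Option (V ⊕ V)) = (e i).2} with hBadS
  have hbadcard : BadS.toFinset.card ≤ b := by
    rw [← Set.ncard_eq_toFinset_card']
    exact hb none
  have hmle : n - (a + b) ≤ BadS.toFinsetᶜ.card := by
    rw [Finset.card_compl]
    simp only [Fintype.card_fin]
    omega
  obtain ⟨S', hS'sub, hS'card⟩ := Finset.exists_subset_card_eq hmle
  let f0 : Fin (n - (a + b)) → Fin (n - a) :=
    fun j => ((S'.orderIsoOfFin hS'card) j : Fin (n - a))
  have hf0inj : Function.Injective f0 := by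
    intro i j hij
    exact (S'.orderIsoOfFin hS'card).injective (Subtype.ext hij)
  have hgood : ∀ j, ((e (f0 j)).1).isSome ∧ ((e (f0 j)).2).isSome := by
    intro j
    have hmem : f0 j ∈ BadS.toFinsetᶜ := hS'sub ((S'.orderIsoOfFin hS'card) j).2
    rw [Finset.mem_compl, Set.mem_toFinset, hBadS, Set.mem_setOf_eq] at hmem
    push_neg at hmem
    rw [← Option.ne_none_iff_isSome, ← Option.ne_none_iff_isSome]
    exact ⟨fun h => hmem.1 h.symm, fun h => hmem.2 h.symm⟩
  let pr : V ⊕ V → V := Sum.elim id id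
  let e' : Fin (n - (a + b)) → V × V :=
    fun j => (pr (((e (f0 j)).1).get (hgood j).1), pr (((e (f0 j)).2).get (hgood j).2))
  obtain ⟨σ, hσ⟩ := exists_perm_extend
    (⟨Fin.castLE (Nat.sub_le n (a + b)), Fin.castLE_injective _⟩ :
      Fin (n - (a + b)) ↪ Fin n)
    (⟨fun j => Fin.castLE (Nat.sub_le n a) (f0 j),
      fun i j hij => hf0inj (Fin.castLE_injective _ hij)⟩ : Fin (n - (a + b)) ↪ Fin n)
  simp only [Function.Embedding.coeFn_mk] at hσ
  -- the new color classes
  set Q : Fin n → Set V := fun i => {v | some (Sum.inl v) ∈ P (σ i)} with hQ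
  have hQind : ∀ i, IsIndep G (Q i) := by
    intro i u hu v hv hadj
    exact hind (σ i) hu hv hadj
  have key : ∀ j : Fin (n - (a + b)),
      G.Adj (e' j).1 (e' j).2 ∧
      (G.neighborSet (e' j).1 ∪ G.neighborSet (e' j).2) ∩
        Q (Fin.castLE (Nat.sub_le n (a + b)) j) = ∅ := by
    intro j
    obtain ⟨x₁, hx₁⟩ := Option.isSome_iff_exists.mp (hgood j).1
    obtain ⟨x₂, hx₂⟩ := Option.isSome_iff_exists.mp (hgood j).2
    have he' : e' j = (pr x₁, pr x₂) := by simp [e', hx₁, hx₂]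
    have hadjM : (mycielskian G).Adj (some x₁) (some x₂) := by
      have := (hsupp (f0 j)).1; rwa [hx₁, hx₂] at this
    have hempty := (hsupp (f0 j)).2
    rw [hx₁, hx₂] at hempty
    rw [he']
    constructor
    · rcases x₁ with u₁ | u₁ <;> rcases x₂ with u₂ | u₂
      · exact hadjM
      · exact hadjM
      · exact hadjM
      · exact hadjM.elim
    · apply Set.eq_empty_iff_forall_notMem.mpr
      intro w hw
      obtain ⟨hwN, hwP⟩ := hw
      have hwM : some (Sum.inl w) ∈
          ((mycielskian G).neighborSet (some x₁) ∪ (mycielskian G).neighborSet (some x₂)) := by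
        rcases hwN with hw1 | hw1
        · left; rcases x₁ with u | u
          · exact hw1
          · exact hw1
        · right; rcases x₂ with u | u
          · exact hw1
          · exact hw1
      have hwP' : some (Sum.inl w) ∈ P (Fin.castLE (Nat.sub_le n a) (f0 j)) := by
        have := hwP
        rw [hQ] at this
        simp only [Set.mem_setOf_eq] at this
        rwa [hσ j] at this
      exact absurd (hempty ▸ Set.mem_inter hwM hwP' :
        some (Sum.inl w) ∈ (∅ : Set (Option (V ⊕ V)))) (Set.notMem_empty _)
  refine ⟨Q, e', ?_, hQind, ?_, key, ?_⟩
  · intro v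
    obtain ⟨i₀, hi₀, huniq⟩ := hcov (some (Sum.inl v))
    refine ⟨σ.symm i₀, ?_, ?_⟩
    · show some (Sum.inl v) ∈ P (σ (σ.symm i₀))
      rw [Equiv.apply_symm_apply]; exact hi₀
    · intro j hj
      have hji : σ j = i₀ := huniq (σ j) hj
      exact (Equiv.eq_symm_apply σ).mpr hji
  · intro j
    exact isFreeIndep_of_support G (hQind _) (key j).1 (key j).2
  · intro v
    set T : Set (Fin (n - a)) :=
      {i | some (Sum.inl v) = (e i).1 ∨ some (Sum.inl v) = (e i).2} ∪
      {i | some (Sum.inr v) = (e i).1 ∨ some (Sum.inr v) = (e i).2} with hT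
    have hsub : f0 '' {j | v = (e' j).1 ∨ v = (e' j).2} ⊆ T := by
      rintro i ⟨j, hj, rfl⟩
      simp only [Set.mem_setOf_eq] at hj
      obtain ⟨x₁, hx₁⟩ := Option.isSome_iff_exists.mp (hgood j).1
      obtain ⟨x₂, hx₂⟩ := Option.isSome_iff_exists.mp (hgood j).2
      simp only [e', hx₁, hx₂, Option.get_some] at hj
      rcases hj with hj | hj
      · rcases x₁ with u | u
        · left; left; rw [hx₁]; simp [pr] at hj; rw [hj]
        · right; left; rw [hx₁]; simp [pr] at hj; rw [hj]
      · rcases x₂ with u | u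
        · left; right; rw [hx₂]; simp [pr] at hj; rw [hj]
        · right; right; rw [hx₂]; simp [pr] at hj; rw [hj]
    calc Set.ncard {j | v = (e' j).1 ∨ v = (e' j).2}
        = Set.ncard (f0 '' {j | v = (e' j).1 ∨ v = (e' j).2}) :=
          (Set.ncard_image_of_injective _ hf0inj).symm
      _ ≤ Set.ncard T := Set.ncard_le_ncard hsub (Set.toFinite T)
      _ ≤ Set.ncard {i : Fin (n - a) | some (Sum.inl v) = (e i).1 ∨ some (Sum.inl v) = (e i).2}
          + Set.ncard {i : Fin (n - a) | some (Sum.inr v) = (e i).1 ∨ some (Sum.inr v) = (e i).2} :=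
          Set.ncard_union_le _ _
      _ ≤ b + b := Nat.add_le_add (hb (some (Sum.inl v))) (hb (some (Sum.inr v)))
      _ = 2 * b := by ring

/-- `φ^{a+b}_{2b}(G) ≤ φ^a_b(M(G))`. -/
lemma abFreeChrom_myc_le (G : SimpleGraph V) (a b : ℕ) :
    abFreeChrom G (a + b) (2 * b) ≤ abFreeChrom (mycielskian G) a b := by
  apply sInf_le_sInf
  rintro x ⟨n, rfl, hn⟩
  exact ⟨n, rfl, abfree_of_myc G a b n hn⟩

end Aux

/-- `φ^a_b(M(G)) ≥ φ^{a+b}_{2b}(G)` and consequently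
`φ^0_2(M^t(G)) ≥ φ^{2^{t+1}-2}_{2^{t+1}}(G)`. -/
theorem stmt13 {V : Type*} [Fintype V] (G : SimpleGraph V) :
    (∀ a b : ℕ, 1 ≤ b →
        abFreeChrom G (a + b) (2 * b) ≤ abFreeChrom (mycielskian G) a b) ∧
      ∀ t : ℕ, 1 ≤ t →
        abFreeChrom G (2 ^ (t + 1) - 2) (2 ^ (t + 1)) ≤ abFreeChrom (mycIter G t) 0 2 := by
  constructor
  · intro a b _
    exact abFreeChrom_myc_le G a b
  · intro t _
    have main : ∀ k, k ≤ t →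
        abFreeChrom (mycIter G (t - k)) (2 ^ (k + 1) - 2) (2 ^ (k + 1)) ≤
          abFreeChrom (mycIter G t) 0 2 := by
      intro k
      induction k with
      | zero =>
        intro _
        simp only [Nat.sub_zero, pow_one]
        exact le_refl _
      | succ k ih =>
        intro hk
        have ih' := ih (Nat.le_of_succ_le hk)
        have ht : t - k = (t - (k + 1)) + 1 := by omega
        rw [ht] at ih'
        have step := abFreeChrom_myc_le (mycIter G (t - (k + 1)))
          (2 ^ (k + 1) - 2) (2 ^ (k + 1))
        have h2 : 2 ≤ 2 ^ (k + 1) := Nat.one_lt_two_pow_iff.mpr (Nat.succ_ne_zero k)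
        have he1 : 2 ^ (k + 1) - 2 + 2 ^ (k + 1) = 2 ^ (k + 1 + 1) - 2 := by
          have : 2 ^ (k + 1 + 1) = 2 * 2 ^ (k + 1) := by rw [pow_succ]; ring
          omega
        have he2 : 2 * 2 ^ (k + 1) = 2 ^ (k + 1 + 1) := by rw [pow_succ]; ring
        rw [he1, he2] at step
        exact le_trans step ih'
    have := main t le_rfl
    rwa [Nat.sub_self] at this
end

section
/- Let m > 2n be positive integers and a ≥ 0, b ≥ 1 integers. Then φ^a_b(KG(m,n)) ≥ (C(m,n) − a·C(m−1,n−1)) / (C(m−1,n−1) − C(m−n−1,n−1)). -/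
open SimpleGraph

variable {V : Type*} {W : Type*}

section HMXsec


namespace HMX
open Finset

def Inter2 (F : Finset (Finset ℕ)) : Prop := ∀ S ∈ F, ∀ T ∈ F, (S ∩ T).Nonempty
def CrossInt (A B : Finset (Finset ℕ)) : Prop := ∀ S ∈ A, ∀ T ∈ B, (S ∩ T).Nonempty
def Ground (M : ℕ) (F : Finset (Finset ℕ)) : Prop := ∀ S ∈ F, S ⊆ range M
def Unif (k : ℕ) (F : Finset (Finset ℕ)) : Prop := ∀ S ∈ F, S.card = k
def Shifted (F : Finset (Finset ℕ)) : Prop :=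
  ∀ i j : ℕ, i < j → ∀ S ∈ F, j ∈ S → i ∉ S → insert i (S.erase j) ∈ F
def CoverC (c : ℕ) (F : Finset (Finset ℕ)) : Prop := ∀ S ∈ F, (S ∩ Icc 1 c).Nonempty

def sij (i j : ℕ) (S : Finset ℕ) : Finset ℕ := insert i (S.erase j)

lemma card_sij {i j : ℕ} {S : Finset ℕ} (hj : j ∈ S) (hi : i ∉ S) :
    (sij i j S).card = S.card := by
  rw [sij, card_insert_of_notMem (fun h => hi (mem_of_mem_erase h)),
    card_erase_of_mem hj]
  have : 1 ≤ S.card := card_pos.2 ⟨j, hj⟩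
  omega

lemma sij_subset {i j M : ℕ} {S : Finset ℕ} (hiM : i < M) (hS : S ⊆ range M) :
    sij i j S ⊆ range M := by
  intro x hx
  rcases mem_insert.1 hx with rfl | hx
  · exact mem_range.2 hiM
  · exact hS (mem_of_mem_erase hx)

lemma mem_sij_self {i j : ℕ} (hij : i ≠ j) {S : Finset ℕ} (hi : i ∉ S) : j ∉ sij i j S := by
  simp [sij, hij, fun h : j ∈ S.erase j => (mem_erase.1 h).1 rfl]
  intro h; exact absurd h (Ne.symm hij)

noncomputable def shStep (i j : ℕ) (F : Finset (Finset ℕ)) (S : Finset ℕ) : Finset ℕ :=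
  if j ∈ S ∧ i ∉ S ∧ sij i j S ∉ F then sij i j S else S

noncomputable def comp (i j : ℕ) (F : Finset (Finset ℕ)) : Finset (Finset ℕ) :=
  F.image (shStep i j F)

lemma shStep_injOn (i j : ℕ) (hij : i ≠ j) (F : Finset (Finset ℕ)) :
    Set.InjOn (shStep i j F) F := by
  intro S hS T hT hST
  by_cases h1 : j ∈ S ∧ i ∉ S ∧ sij i j S ∉ F <;>
  by_cases h2 : j ∈ T ∧ i ∉ T ∧ sij i j T ∉ F
  · -- both moved
    rw [shStep, if_pos h1, shStep, if_pos h2] at hST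
    obtain ⟨hjS, hiS, -⟩ := h1; obtain ⟨hjT, hiT, -⟩ := h2
    have h3 : S.erase j = T.erase j := by
      have hiS' : i ∉ S.erase j := fun h => hiS (mem_of_mem_erase h)
      have hiT' : i ∉ T.erase j := fun h => hiT (mem_of_mem_erase h)
      have := congrArg (fun X => Finset.erase X i) hST
      simpa [sij, erase_insert hiS', erase_insert hiT'] using this
    have := congrArg (insert j) h3
    rwa [insert_erase hjS, insert_erase hjT] at this
  · exfalso
    rw [shStep, if_pos h1, shStep, if_neg h2] at hST
    exact h1.2.2 (hST ▸ hT)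
  · exfalso
    rw [shStep, if_neg h1, shStep, if_pos h2] at hST
    exact h2.2.2 (hST ▸ hS)
  · rwa [shStep, if_neg h1, shStep, if_neg h2] at hST

lemma card_comp (i j : ℕ) (hij : i ≠ j) (F : Finset (Finset ℕ)) :
    (comp i j F).card = F.card :=
  card_image_of_injOn (shStep_injOn i j hij F)

lemma shifted_of_fixed {F : Finset (Finset ℕ)}
    (h : ∀ i j : ℕ, i < j → comp i j F = F) : Shifted F := by
  intro i j hij S hS hjS hiS
  by_contra hne
  have : shStep i j F S ∈ comp i j F := mem_image_of_mem _ hS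
  rw [h i j hij] at this
  rw [shStep, if_pos ⟨hjS, hiS, hne⟩] at this
  exact hne this

lemma unif_comp {k i j : ℕ} {F : Finset (Finset ℕ)} (hU : Unif k F) :
    Unif k (comp i j F) := by
  intro S hS
  obtain ⟨T, hT, rfl⟩ := mem_image.1 hS
  rw [shStep]
  split
  · next h => rw [card_sij h.1 h.2.1]; exact hU T hT
  · exact hU T hT

lemma ground_comp {M i j : ℕ} (hij : i < j) {F : Finset (Finset ℕ)} (hG : Ground M F) :
    Ground M (comp i j F) := by
  intro S hS
  obtain ⟨T, hT, rfl⟩ := mem_image.1 hS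
  rw [shStep]
  split
  · next h =>
    have hjM : j < M := mem_range.1 (hG T hT h.1)
    exact sij_subset (lt_trans hij hjM) (hG T hT)
  · exact hG T hT

lemma cross_comp {i j : ℕ} (hij : i ≠ j) {A B : Finset (Finset ℕ)}
    (hAB : CrossInt A B) : CrossInt (comp i j A) (comp i j B) := by
  intro S' hS' T' hT'
  obtain ⟨S, hS, rfl⟩ := mem_image.1 hS'
  obtain ⟨T, hT, rfl⟩ := mem_image.1 hT'
  by_cases h1 : j ∈ S ∧ i ∉ S ∧ sij i j S ∉ A <;>
  by_cases h2 : j ∈ T ∧ i ∉ T ∧ sij i j T ∉ B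
  · rw [shStep, if_pos h1, shStep, if_pos h2]
    exact ⟨i, mem_inter.2 ⟨mem_insert_self _ _, mem_insert_self _ _⟩⟩
  · -- S moved, T not
    rw [shStep, if_pos h1, shStep, if_neg h2]
    obtain ⟨x, hx⟩ := hAB S hS T hT
    rw [mem_inter] at hx
    by_cases hxj : x = j
    · subst hxj
      -- S ∩ T could be only at j; use T's reason for being unmoved
      rcases not_and_or.1 h2 with hjT | h2'
      · exact absurd hx.2 hjT
      rcases not_and_or.1 h2' with hiT | hsT
      · refine ⟨i, mem_inter.2 ⟨mem_insert_self _ _, not_not.1 hiT⟩⟩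
      · -- sij i j T ∈ B : S must meet it
        obtain ⟨y, hy⟩ := hAB S hS _ (not_not.1 hsT)
        rw [mem_inter] at hy
        rcases mem_insert.1 hy.2 with rfl | hy2
        · exact absurd hy.1 h1.2.1
        · refine ⟨y, mem_inter.2 ⟨?_, mem_of_mem_erase hy2⟩⟩
          exact mem_insert_of_mem (mem_erase.2 ⟨(mem_erase.1 hy2).1, hy.1⟩)
    · refine ⟨x, mem_inter.2 ⟨?_, hx.2⟩⟩
      rcases eq_or_ne x i with rfl | hxi
      · exact mem_insert_self _ _
      · exact mem_insert_of_mem (mem_erase.2 ⟨hxj, hx.1⟩)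
  · -- T moved, S not
    rw [shStep, if_neg h1, shStep, if_pos h2]
    obtain ⟨x, hx⟩ := hAB S hS T hT
    rw [mem_inter] at hx
    by_cases hxj : x = j
    · subst hxj
      rcases not_and_or.1 h1 with hjS | h1'
      · exact absurd hx.1 hjS
      rcases not_and_or.1 h1' with hiS | hsS
      · exact ⟨i, mem_inter.2 ⟨not_not.1 hiS, mem_insert_self _ _⟩⟩
      · obtain ⟨y, hy⟩ := hAB _ (not_not.1 hsS) T hT
        rw [mem_inter] at hy
        rcases mem_insert.1 hy.1 with rfl | hy1
        · exact absurd hy.2 h2.2.1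
        · refine ⟨y, mem_inter.2 ⟨mem_of_mem_erase hy1, ?_⟩⟩
          exact mem_insert_of_mem (mem_erase.2 ⟨(mem_erase.1 hy1).1, hy.2⟩)
    · refine ⟨x, mem_inter.2 ⟨hx.1, ?_⟩⟩
      rcases eq_or_ne x i with rfl | hxi
      · exact mem_insert_self _ _
      · exact mem_insert_of_mem (mem_erase.2 ⟨hxj, hx.2⟩)
  · rw [shStep, if_neg h1, shStep, if_neg h2]
    exact hAB S hS T hT

/-- weight of a single set -/
def w1 (S : Finset ℕ) : ℕ := S.sum id
/-- weight of a family -/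
def wF (F : Finset (Finset ℕ)) : ℕ := F.sum w1

lemma w1_sij_lt {i j : ℕ} (hij : i < j) {S : Finset ℕ} (hj : j ∈ S) (hi : i ∉ S) :
    w1 (sij i j S) < w1 S := by
  have hiE : i ∉ S.erase j := fun h => hi (mem_of_mem_erase h)
  rw [w1, sij, sum_insert hiE, w1]
  have h2 : ∑ x ∈ S.erase j, id x + id j = ∑ x ∈ S, id x := sum_erase_add S id hj
  simp only [id] at h2 ⊢
  omega

lemma wF_comp_le (i j : ℕ) (hij : i < j) (F : Finset (Finset ℕ)) :
    wF (comp i j F) ≤ wF F := by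
  rw [wF, comp, sum_image (fun x hx y hy h => shStep_injOn i j hij.ne F hx hy h)]
  apply sum_le_sum
  intro S hS
  rw [shStep]
  split
  · next h => exact (w1_sij_lt hij h.1 h.2.1).le
  · exact le_rfl

lemma wF_comp_lt {i j : ℕ} (hij : i < j) {F : Finset (Finset ℕ)} (hne : comp i j F ≠ F) :
    wF (comp i j F) < wF F := by
  rw [wF, comp, sum_image (fun x hx y hy h => shStep_injOn i j hij.ne F hx hy h)]
  have hx : ∃ S ∈ F, shStep i j F S ≠ S := by
    by_contra h
    push_neg at h
    apply hne
    rw [comp]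
    have : F.image (shStep i j F) = F.image id := image_congr (fun x hx => h x hx)
    rw [this, image_id]
  obtain ⟨S, hS, hSne⟩ := hx
  have h : j ∈ S ∧ i ∉ S ∧ sij i j S ∉ F := by
    by_contra h; rw [shStep, if_neg h] at hSne; exact hSne rfl
  refine sum_lt_sum (fun T hT => ?_) ⟨S, hS, ?_⟩
  · simp only [shStep]; split
    · next hc => exact (w1_sij_lt hij hc.1 hc.2.1).le
    · exact le_rfl
  · simp only [shStep, if_pos h]
    exact w1_sij_lt hij h.1 h.2.1

/-! ### Traces -/

def del (t : ℕ) (F : Finset (Finset ℕ)) : Finset (Finset ℕ) := F.filter (fun S => t ∉ S)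
def contr (t : ℕ) (F : Finset (Finset ℕ)) : Finset (Finset ℕ) :=
  (F.filter (fun S => t ∈ S)).image (fun S => S.erase t)

lemma card_del_add_card_contr (t : ℕ) (F : Finset (Finset ℕ)) :
    F.card = (del t F).card + (contr t F).card := by
  rw [del, contr, card_image_of_injOn, add_comm]
  · rw [← card_filter_add_card_filter_not (p := fun S => t ∈ S)]
  · intro S hS T hT h
    rw [mem_coe, mem_filter] at hS hT
    have := congrArg (insert t) h
    rwa [insert_erase hS.2, insert_erase hT.2] at this

lemma mem_contr {t : ℕ} {F : Finset (Finset ℕ)} {T : Finset ℕ} :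
    T ∈ contr t F ↔ ∃ S ∈ F, t ∈ S ∧ S.erase t = T := by
  simp only [contr, mem_image, mem_filter]
  constructor
  · rintro ⟨S, ⟨h1, h2⟩, h3⟩; exact ⟨S, h1, h2, h3⟩
  · rintro ⟨S, h1, h2, h3⟩; exact ⟨S, ⟨h1, h2⟩, h3⟩

lemma ground_del {M : ℕ} {F : Finset (Finset ℕ)} (hG : Ground M F) :
    Ground (M - 1) (del (M - 1) F) := by
  intro S hS
  rw [del, mem_filter] at hS
  intro x hx
  have := mem_range.1 (hG S hS.1 hx)
  rw [mem_range]
  rcases lt_or_ge x (M-1) with h | h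
  · exact h
  · exfalso; have : x = M - 1 := by omega
    exact hS.2 (this ▸ hx)

lemma unif_del {k t : ℕ} {F : Finset (Finset ℕ)} (hU : Unif k F) : Unif k (del t F) :=
  fun S hS => hU S (mem_filter.1 hS).1

lemma inter_del {t : ℕ} {F : Finset (Finset ℕ)} (hI : Inter2 F) : Inter2 (del t F) :=
  fun S hS T hT => hI S (mem_filter.1 hS).1 T (mem_filter.1 hT).1

lemma cover_del {c t : ℕ} {F : Finset (Finset ℕ)} (hC : CoverC c F) : CoverC c (del t F) :=
  fun S hS => hC S (mem_filter.1 hS).1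

lemma shifted_del {M : ℕ} {F : Finset (Finset ℕ)} (hSh : Shifted F) (hG : Ground M F) :
    Shifted (del (M - 1) F) := by
  intro i j hij S hS hjS hiS
  rw [del, mem_filter] at hS
  have hj : j < M - 1 := by
    have h1 := mem_range.1 (hG S hS.1 hjS)
    rcases lt_or_ge j (M-1) with h | h
    · exact h
    · exfalso; have : j = M - 1 := by omega
      exact hS.2 (this ▸ hjS)
  rw [del, mem_filter]
  refine ⟨hSh i j hij S hS.1 hjS hiS, ?_⟩
  intro hmem
  rcases mem_insert.1 hmem with h | h
  · omega
  · exact hS.2 (mem_of_mem_erase h)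

lemma ground_contr {M : ℕ} {F : Finset (Finset ℕ)} (hG : Ground M F) :
    Ground (M - 1) (contr (M - 1) F) := by
  intro T hT
  obtain ⟨S, hS, htS, rfl⟩ := mem_contr.1 hT
  intro x hx
  rw [mem_erase] at hx
  have := mem_range.1 (hG S hS hx.2)
  rw [mem_range]; omega

lemma unif_contr {k t : ℕ} {F : Finset (Finset ℕ)} (hU : Unif k F) :
    Unif (k - 1) (contr t F) := by
  intro T hT
  obtain ⟨S, hS, htS, rfl⟩ := mem_contr.1 hT
  rw [card_erase_of_mem htS, hU S hS]

lemma cover_contr {c M : ℕ} {F : Finset (Finset ℕ)} (hc : c < M - 1) (hC : CoverC c F) :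
    CoverC c (contr (M - 1) F) := by
  intro T hT
  obtain ⟨S, hS, htS, rfl⟩ := mem_contr.1 hT
  obtain ⟨x, hx⟩ := hC S hS
  rw [mem_inter] at hx
  have : x ≤ c := (mem_Icc.1 hx.2).2
  exact ⟨x, mem_inter.2 ⟨mem_erase.2 ⟨by omega, hx.1⟩, hx.2⟩⟩

lemma shifted_contr {M : ℕ} {F : Finset (Finset ℕ)} (hSh : Shifted F) (hG : Ground M F) :
    Shifted (contr (M - 1) F) := by
  intro i j hij T hT hjT hiT
  obtain ⟨S, hS, htS, rfl⟩ := mem_contr.1 hT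
  have hjS : j ∈ S := mem_of_mem_erase hjT
  have hj : j ≠ M - 1 := (mem_erase.1 hjT).1
  have hjM : j < M := mem_range.1 (hG S hS hjS)
  have hiS : i ∉ S := by
    intro h
    exact hiT (mem_erase.2 ⟨by omega, h⟩)
  have h1 : insert i (S.erase j) ∈ F := hSh i j hij S hS hjS hiS
  rw [mem_contr]
  refine ⟨insert i (S.erase j), h1, ?_, ?_⟩
  · exact mem_insert_of_mem (mem_erase.2 ⟨by omega, htS⟩)
  · rw [erase_insert_of_ne (by omega : i ≠ M - 1)]
    congr 1
    rw [erase_right_comm]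

/-- key spare-element lemma : contracted families of shifted families cross-intersect -/
lemma cross_contr {a M : ℕ} {A B : Finset (Finset ℕ)} (hSh : Shifted A)
    (hX : CrossInt A B) (hUA : Unif a A) (hUB : Unif a B)
    (hGA : Ground M A) (hGB : Ground M B) (hM : 2 * a ≤ M) (ha : 1 ≤ a) :
    CrossInt (contr (M - 1) A) (contr (M - 1) B) := by
  intro S' hS' T' hT'
  obtain ⟨S, hS, hmS, rfl⟩ := mem_contr.1 hS'
  obtain ⟨T, hT, hmT, rfl⟩ := mem_contr.1 hT'
  by_contra hemp
  rw [not_nonempty_iff_eq_empty] at hemp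
  -- S ∩ T = {M-1}
  have hST : ∀ x ∈ S, x ∈ T → x = M - 1 := by
    intro x hxS hxT
    by_contra hne
    have : x ∈ S.erase (M-1) ∩ T.erase (M-1) :=
      mem_inter.2 ⟨mem_erase.2 ⟨hne, hxS⟩, mem_erase.2 ⟨hne, hxT⟩⟩
    rw [hemp] at this
    exact notMem_empty x this
  -- find spare element
  have hcard : (S ∪ T).card ≤ 2 * a - 1 := by
    have h1 : (S ∪ T).card + (S ∩ T).card = S.card + T.card := card_union_add_card_inter S T
    have h2 : (S ∩ T).card ≥ 1 := by
      refine card_pos.2 ⟨M - 1, mem_inter.2 ⟨hmS, hmT⟩⟩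
    rw [hUA S hS, hUB T hT] at h1
    omega
  have hsub : S ∪ T ⊆ range M := union_subset (hGA S hS) (hGB T hT)
  have hspare : ∃ x, x < M - 1 ∧ x ∉ S ∪ T := by
    by_contra hall
    push_neg at hall
    have hmem : M - 1 ∈ S ∪ T := mem_union_left _ hmS
    have hsub : range (M - 1) ⊆ (S ∪ T).erase (M - 1) := by
      intro x hx
      have hx' := mem_range.1 hx
      exact mem_erase.2 ⟨by omega, hall x hx'⟩
    have h5 := card_le_card hsub
    rw [card_range, card_erase_of_mem hmem] at h5
    omega
  obtain ⟨x, hxM, hxST⟩ := hspare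
  have hxS : x ∉ S := fun h => hxST (mem_union_left _ h)
  have hxT : x ∉ T := fun h => hxST (mem_union_right _ h)
  have hS2 : insert x (S.erase (M-1)) ∈ A := hSh x (M-1) hxM S hS hmS hxS
  obtain ⟨y, hy⟩ := hX _ hS2 T hT
  rw [mem_inter] at hy
  rcases mem_insert.1 hy.1 with rfl | hy1
  · exact hxT hy.2
  · have hyS : y ∈ S := mem_of_mem_erase hy1
    have hyne : y ≠ M - 1 := (mem_erase.1 hy1).1
    exact hyne (hST y hyS hy.2)

lemma inter_contr {k M : ℕ} {F : Finset (Finset ℕ)} (hSh : Shifted F) (hI : Inter2 F)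
    (hU : Unif k F) (hG : Ground M F) (hM : 2 * k ≤ M) (hk : 1 ≤ k) :
    Inter2 (contr (M - 1) F) :=
  cross_contr hSh hI hU hU hG hG hM hk

/-! ### Counting bounds -/

lemma card_le_powersetCard {α : Type*} [DecidableEq α] {𝒜 : Finset (Finset α)}
    {X : Finset α} {k : ℕ} (h1 : ∀ S ∈ 𝒜, S ⊆ X) (h2 : ∀ S ∈ 𝒜, S.card = k) :
    𝒜.card ≤ X.card.choose k := by
  have : 𝒜 ⊆ X.powersetCard k := by
    intro S hS
    rw [mem_powersetCard]
    exact ⟨h1 S hS, h2 S hS⟩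
  calc 𝒜.card ≤ (X.powersetCard k).card := card_le_card this
    _ = X.card.choose k := card_powersetCard _ _

lemma count_bound {α : Type*} [DecidableEq α] {𝒜 : Finset (Finset α)}
    {X Y : Finset α} {k : ℕ} (h1 : ∀ S ∈ 𝒜, S ⊆ X) (h2 : ∀ S ∈ 𝒜, S.card = k)
    (h3 : ∀ S ∈ 𝒜, (S ∩ Y).Nonempty) :
    𝒜.card + (X.card - Y.card).choose k ≤ X.card.choose k := by
  set 𝒟 := (X \ Y).powersetCard k with h𝒟
  have hdisj : Disjoint 𝒜 𝒟 := by
    rw [Finset.disjoint_left]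
    intro S hS hSD
    rw [h𝒟, mem_powersetCard] at hSD
    obtain ⟨y, hy⟩ := h3 S hS
    rw [mem_inter] at hy
    exact (mem_sdiff.1 (hSD.1 hy.1)).2 hy.2
  have hsub : 𝒜 ∪ 𝒟 ⊆ X.powersetCard k := by
    intro S hS
    rcases mem_union.1 hS with h | h
    · rw [mem_powersetCard]; exact ⟨h1 S h, h2 S h⟩
    · rw [h𝒟, mem_powersetCard] at h
      rw [mem_powersetCard]
      exact ⟨h.1.trans (sdiff_subset), h.2⟩
  have hle := card_le_card hsub
  rw [card_union_of_disjoint hdisj, card_powersetCard, card_powersetCard] at hle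
  calc 𝒜.card + (X.card - Y.card).choose k ≤ 𝒜.card + (X \ Y).card.choose k := by
        apply Nat.add_le_add_left
        apply Nat.choose_le_choose
        have h2' := card_sdiff_add_card X Y
        have h3' := card_le_card (Finset.subset_union_left : X ⊆ X ∪ Y)
        omega
    _ ≤ X.card.choose k := hle

lemma count_bound_star {α : Type*} [DecidableEq α] {𝒜 : Finset (Finset α)}
    {X Y : Finset α} {k : ℕ} {z : α} (hzX : z ∈ X) (hzY : z ∉ Y) (hYX : Y ⊆ X)
    (h1 : ∀ S ∈ 𝒜, S ⊆ X) (h2 : ∀ S ∈ 𝒜, S.card = k) (h0 : ∀ S ∈ 𝒜, z ∈ S)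
    (h3 : ∀ S ∈ 𝒜, (S ∩ Y).Nonempty) (hk : 1 ≤ k) :
    𝒜.card + (X.card - 1 - Y.card).choose (k-1) ≤ (X.card - 1).choose (k-1) := by
  set ℬ := 𝒜.image (fun S => S.erase z) with hℬ
  have hcard : ℬ.card = 𝒜.card := by
    rw [hℬ]
    apply card_image_of_injOn
    intro S hS T hT h
    rw [mem_coe] at hS hT
    have := congrArg (insert z) h
    rwa [insert_erase (h0 S hS), insert_erase (h0 T hT)] at this
  have hmain : ℬ.card + ((X.erase z).card - Y.card).choose (k-1) ≤ (X.erase z).card.choose (k-1) := by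
    apply count_bound
    · intro S hS
      obtain ⟨T, hT, rfl⟩ := mem_image.1 hS
      exact fun x hx => mem_erase.2 ⟨(mem_erase.1 hx).1, h1 T hT (mem_of_mem_erase hx)⟩
    · intro S hS
      obtain ⟨T, hT, rfl⟩ := mem_image.1 hS
      rw [card_erase_of_mem (h0 T hT), h2 T hT]
    · intro S hS
      obtain ⟨T, hT, rfl⟩ := mem_image.1 hS
      obtain ⟨y, hy⟩ := h3 T hT
      rw [mem_inter] at hy
      refine ⟨y, mem_inter.2 ⟨mem_erase.2 ⟨?_, hy.1⟩, hy.2⟩⟩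
      rintro rfl; exact hzY hy.2
  rw [card_erase_of_mem hzX, hcard] at hmain
  exact hmain

/-! ### EKR transfer to ℕ ground -/

def toFin (M : ℕ) (S : Finset ℕ) : Finset (Fin M) :=
  (S.filter (· < M)).attachFin (fun m hm => (mem_filter.1 hm).2)

lemma mem_toFin {M : ℕ} {S : Finset ℕ} {x : Fin M} : x ∈ toFin M S ↔ (x : ℕ) ∈ S := by
  rw [toFin, mem_attachFin, mem_filter]
  exact ⟨fun h => h.1, fun h => ⟨h, x.2⟩⟩

lemma card_toFin {M : ℕ} {S : Finset ℕ} (hS : S ⊆ range M) : (toFin M S).card = S.card := by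
  rw [toFin, card_attachFin]
  congr 1
  apply filter_true_of_mem
  intro x hx; exact mem_range.1 (hS hx)

lemma toFin_injOn {M : ℕ} {S T : Finset ℕ} (hS : S ⊆ range M) (hT : T ⊆ range M)
    (h : toFin M S = toFin M T) : S = T := by
  ext x
  constructor
  · intro hx
    have hxM : x < M := mem_range.1 (hS hx)
    have : (⟨x, hxM⟩ : Fin M) ∈ toFin M S := mem_toFin.2 hx
    rw [h] at this
    exact mem_toFin.1 this
  · intro hx
    have hxM : x < M := mem_range.1 (hT hx)
    have : (⟨x, hxM⟩ : Fin M) ∈ toFin M T := mem_toFin.2 hx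
    rw [← h] at this
    exact mem_toFin.1 this

lemma ekrN {M k : ℕ} {F : Finset (Finset ℕ)} (hG : Ground M F) (hU : Unif k F)
    (hI : Inter2 F) (hk : 1 ≤ k) (hM : 2 * k ≤ M) :
    F.card ≤ (M - 1).choose (k - 1) := by
  set 𝒜 := F.image (toFin M) with h𝒜
  have hcard : 𝒜.card = F.card := by
    apply card_image_of_injOn
    intro S hS T hT h
    exact toFin_injOn (hG S hS) (hG T hT) h
  have h1 : (𝒜 : Set (Finset (Fin M))).Intersecting := by
    intro S hS T hT
    rw [h𝒜, coe_image, Set.mem_image] at hS hT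
    obtain ⟨S0, hS0, rfl⟩ := hS
    obtain ⟨T0, hT0, rfl⟩ := hT
    rw [mem_coe] at hS0 hT0
    obtain ⟨x, hx⟩ := hI S0 hS0 T0 hT0
    rw [mem_inter] at hx
    have hxM : x < M := mem_range.1 (hG S0 hS0 hx.1)
    rw [Finset.disjoint_left]
    push_neg
    exact ⟨⟨x, hxM⟩, mem_toFin.2 hx.1, mem_toFin.2 hx.2⟩
  have h2 : (𝒜 : Set (Finset (Fin M))).Sized k := by
    intro S hS
    rw [h𝒜, coe_image, Set.mem_image] at hS
    obtain ⟨S0, hS0, rfl⟩ := hS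
    rw [mem_coe] at hS0
    rw [card_toFin (hG S0 hS0)]
    exact hU S0 hS0
  have h3 : k ≤ M / 2 := Nat.le_div_iff_mul_le two_pos |>.2 (by omega)
  have := Finset.erdos_ko_rado h1 h2 h3
  omega

/-! ### shifted families contain the canonical sets -/

lemma shiftDown {k : ℕ} {F : Finset (Finset ℕ)} (hSh : Shifted F) (hk : 1 ≤ k) :
    ∀ N S, S ∈ F → S.card = k → 0 ∉ S → w1 S ≤ N → Icc 1 k ∈ F := by
  intro N
  induction N with
  | zero =>
    intro S hS hcard h0 hw
    exfalso
    -- S nonempty with all elements ≥ 1, so w1 S ≥ 1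
    obtain ⟨x, hx⟩ := card_pos.1 (hcard ▸ hk)
    have hx1 : 1 ≤ x := by
      rcases Nat.eq_zero_or_pos x with rfl | h
      · exact absurd hx h0
      · exact h
    have : x ≤ w1 S := by
      rw [w1]
      exact single_le_sum (fun y _ => Nat.zero_le y) hx
    omega
  | succ N ih =>
    intro S hS hcard h0 hw
    by_cases heq : S = Icc 1 k
    · exact heq ▸ hS
    have hIcc : (Icc 1 k).card = k := by rw [Nat.card_Icc]; omega
    have hj : ∃ j ∈ S, j ∉ Icc 1 k := by
      by_contra h
      push_neg at h
      exact heq (eq_of_subset_of_card_le h (by omega))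
    obtain ⟨j, hjS, hjI⟩ := hj
    have hi : ∃ i ∈ Icc 1 k, i ∉ S := by
      by_contra h
      push_neg at h
      exact heq (eq_of_subset_of_card_le h (by omega)).symm
    obtain ⟨i, hiI, hiS⟩ := hi
    have hj0 : j ≠ 0 := fun h => h0 (h ▸ hjS)
    have hij : i < j := by
      rw [mem_Icc] at hiI
      rw [mem_Icc] at hjI
      push_neg at hjI
      rcases Nat.lt_or_ge j 1 with h | h
      · omega
      · have := hjI h; omega
    have hS' : insert i (S.erase j) ∈ F := hSh i j hij S hS hjS hiS
    apply ih (insert i (S.erase j)) hS'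
    · rw [card_insert_of_notMem (fun h => hiS (mem_of_mem_erase h)),
        card_erase_of_mem hjS]
      omega
    · intro h
      rcases mem_insert.1 h with h | h
      · rw [mem_Icc] at hiI; omega
      · exact h0 (mem_of_mem_erase h)
    · have := w1_sij_lt hij hjS hiS
      rw [sij] at this
      omega

/-- a shifted nonempty family has a set avoiding M-1 -/
lemma del_nonempty {a M : ℕ} {A : Finset (Finset ℕ)} (hSh : Shifted A)
    (hG : Ground M A) (hU : Unif a A) (hA : A.Nonempty) (haM : a + 1 ≤ M) :
    (del (M - 1) A).Nonempty := by
  obtain ⟨S, hS⟩ := hA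
  by_cases hm : M - 1 ∈ S
  · have : ∃ i, i < M - 1 ∧ i ∉ S := by
      by_contra h
      push_neg at h
      have hsub : range M ⊆ S := by
        intro x hx
        have hx' := mem_range.1 hx
        rcases Nat.lt_or_ge x (M-1) with h2 | h2
        · exact h x h2
        · have : x = M - 1 := by omega
          exact this ▸ hm
      have := card_le_card hsub
      rw [card_range, hU S hS] at this
      omega
    obtain ⟨i, hiM, hiS⟩ := this
    refine ⟨insert i (S.erase (M-1)), mem_filter.2 ⟨hSh i (M-1) hiM S hS hm hiS, ?_⟩⟩
    intro h
    rcases mem_insert.1 h with h | h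
    · omega
    · exact (mem_erase.1 h).1 rfl
  · exact ⟨S, mem_filter.2 ⟨hS, hm⟩⟩

/-! ### Pascal helper -/

lemma pascal' {p q : ℕ} (hp : 1 ≤ p) (hq : 1 ≤ q) :
    p.choose q = (p-1).choose (q-1) + (p-1).choose q := by
  obtain ⟨p', rfl⟩ : ∃ p', p = p' + 1 := ⟨p - 1, by omega⟩
  obtain ⟨q', rfl⟩ : ∃ q', q = q' + 1 := ⟨q - 1, by omega⟩
  simp [Nat.choose_succ_succ]

lemma contr_eq_empty_iff {t : ℕ} {F : Finset (Finset ℕ)} :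
    contr t F = ∅ ↔ ∀ S ∈ F, t ∉ S := by
  rw [contr, image_eq_empty, filter_eq_empty_iff]

lemma cross_del {t : ℕ} {A B : Finset (Finset ℕ)} (hX : CrossInt A B) :
    CrossInt (del t A) (del t B) :=
  fun S hS T hT => hX S (mem_filter.1 hS).1 T (mem_filter.1 hT).1

/-! ### The cross-intersecting pair bound -/

lemma lemC : ∀ M a : ℕ, ∀ A B : Finset (Finset ℕ), 1 ≤ a → 2 * a ≤ M →
    Shifted A → Shifted B → CrossInt A B → Unif a A → Unif a B →
    Ground M A → Ground M B → A.Nonempty → B.Nonempty →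
    A.card + B.card + (M - a).choose a ≤ M.choose a + 1 := by
  intro M
  induction M using Nat.strong_induction_on with
  | _ M ih =>
  intro a A B ha hM hShA hShB hX hUA hUB hGA hGB hA hB
  -- case a = 1
  rcases eq_or_lt_of_le ha with ha1 | ha2
  · -- a = 1 : all sets are the same singleton
    obtain ⟨S, hS⟩ := hA
    obtain ⟨T, hT⟩ := hB
    obtain ⟨z, hz⟩ := Finset.card_eq_one.1 (by rw [hUA S hS, ← ha1])
    have hsingle : ∀ U ∈ A, U = S := by
      intro U hU
      obtain ⟨u, hu⟩ := Finset.card_eq_one.1 (by rw [hUA U hU, ← ha1])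
      obtain ⟨x, hx⟩ := hX U hU T hT
      obtain ⟨y, hy⟩ := hX S hS T hT
      rw [mem_inter] at hx hy
      subst hu; subst hz
      obtain ⟨t, ht⟩ := Finset.card_eq_one.1 (by rw [hUB T hT, ← ha1])
      subst ht
      simp only [mem_singleton] at hx hy
      have : u = z := by omega
      rw [this]
    have hsingleB : ∀ U ∈ B, U = T := by
      intro U hU
      obtain ⟨u, hu⟩ := Finset.card_eq_one.1 (by rw [hUB U hU, ← ha1])
      obtain ⟨x, hx⟩ := hX S hS U hU
      obtain ⟨y, hy⟩ := hX S hS T hT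
      rw [mem_inter] at hx hy
      subst hu; subst hz
      obtain ⟨t, ht⟩ := Finset.card_eq_one.1 (by rw [hUB T hT, ← ha1])
      subst ht
      simp only [mem_singleton] at hx hy
      have : u = t := by omega
      rw [this]
    have hAcard : A.card = 1 := by
      rw [card_eq_one]
      exact ⟨S, eq_singleton_iff_unique_mem.2 ⟨hS, hsingle⟩⟩
    have hBcard : B.card = 1 := by
      rw [card_eq_one]
      exact ⟨T, eq_singleton_iff_unique_mem.2 ⟨hT, hsingleB⟩⟩
    rw [hAcard, hBcard, ← ha1]
    rw [Nat.choose_one_right, Nat.choose_one_right]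
    omega
  -- case M = 2a
  rcases eq_or_lt_of_le hM with hM2 | hM3
  · -- complement argument
    set Bc := B.image (fun T => range M \ T) with hBc
    have hBcard : Bc.card = B.card := by
      apply card_image_of_injOn
      intro S hS T hT h
      rw [mem_coe] at hS hT
      have h' : range M \ S = range M \ T := h
      have e1 : range M \ (range M \ S) = S := by
        rw [sdiff_sdiff_self_left]
        exact inter_eq_right.2 (hGB S hS)
      have e2 : range M \ (range M \ T) = T := by
        rw [sdiff_sdiff_self_left]
        exact inter_eq_right.2 (hGB T hT)
      rw [← e1, ← e2, h']
    have hdisj : Disjoint A Bc := by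
      rw [Finset.disjoint_left]
      intro S hS hSBc
      rw [hBc, mem_image] at hSBc
      obtain ⟨T, hT, rfl⟩ := hSBc
      obtain ⟨x, hx⟩ := hX _ hS T hT
      rw [mem_inter, mem_sdiff] at hx
      exact hx.1.2 hx.2
    have hsub : ∀ S ∈ A ∪ Bc, S ⊆ range M := by
      intro S hS
      rcases mem_union.1 hS with h | h
      · exact hGA S h
      · rw [hBc, mem_image] at h
        obtain ⟨T, hT, rfl⟩ := h
        exact sdiff_subset
    have hunif : ∀ S ∈ A ∪ Bc, S.card = a := by
      intro S hS
      rcases mem_union.1 hS with h | h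
      · exact hUA S h
      · rw [hBc, mem_image] at h
        obtain ⟨T, hT, rfl⟩ := h
        rw [card_sdiff_of_subset (hGB T hT), card_range, hUB T hT]
        omega
    have := card_le_powersetCard hsub hunif
    rw [card_union_of_disjoint hdisj, card_range, hBcard] at this
    have h1 : M - a = a := by omega
    rw [h1, Nat.choose_self]
    omega
  -- main induction step : M ≥ 2a+1, a ≥ 2
  have hM1 : 2 * a ≤ M - 1 := by omega
  set A1 := del (M-1) A with hA1
  set B1 := del (M-1) B with hB1
  set A2 := contr (M-1) A with hA2
  set B2 := contr (M-1) B with hB2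
  have splitA := card_del_add_card_contr (M-1) A
  have splitB := card_del_add_card_contr (M-1) B
  rw [← hA1, ← hA2] at splitA
  rw [← hB1, ← hB2] at splitB
  have ihDel : A1.card + B1.card + (M - 1 - a).choose a ≤ (M-1).choose a + 1 := by
    apply ih (M-1) (by omega) a _ _ ha hM1 (shifted_del hShA hGA) (shifted_del hShB hGB)
      (cross_del hX) (unif_del hUA) (unif_del hUB) (ground_del hGA) (ground_del hGB)
      (del_nonempty hShA hGA hUA hA (by omega)) (del_nonempty hShB hGB hUB hB (by omega))
  have hcross2 : CrossInt A2 B2 := cross_contr hShA hX hUA hUB hGA hGB (by omega) (by omega)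
  have hpas1 : (M - a).choose a = (M - a - 1).choose a + (M - a - 1).choose (a - 1) := by
    rw [pascal' (by omega : 1 ≤ M - a) (by omega : 1 ≤ a)]
    omega
  have hpasM : M.choose a = (M-1).choose (a-1) + (M-1).choose a := pascal' (by omega) (by omega)
  by_cases hA2e : A2 = ∅
  · -- no A-set contains M-1
    obtain ⟨A0, hA0⟩ := hA
    have hA0m : M - 1 ∉ A0 := contr_eq_empty_iff.1 hA2e A0 hA0
    have hcb : B2.card + ((M-1) - a).choose (a-1) ≤ (M-1).choose (a-1) := by
      have := count_bound (𝒜 := B2) (X := range (M-1)) (Y := A0) (k := a - 1)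
        (ground_contr hGB) (unif_contr hUB) ?_
      · rw [card_range] at this
        have : B2.card + (M - 1 - A0.card).choose (a-1) ≤ (M-1).choose (a-1) := this
        rw [hUA A0 hA0] at this
        exact this
      · intro T' hT'
        obtain ⟨T, hT, hmT, rfl⟩ := mem_contr.1 hT'
        obtain ⟨y, hy⟩ := hX A0 hA0 T hT
        rw [mem_inter] at hy
        refine ⟨y, mem_inter.2 ⟨mem_erase.2 ⟨?_, hy.2⟩, hy.1⟩⟩
        rintro rfl; exact hA0m hy.1
    have hA2c : A2.card = 0 := by rw [hA2e]; rfl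
    rw [(by omega : M - 1 - a = M - a - 1)] at ihDel hcb
    omega
  by_cases hB2e : B2 = ∅
  · obtain ⟨B0, hB0⟩ := hB
    have hB0m : M - 1 ∉ B0 := contr_eq_empty_iff.1 hB2e B0 hB0
    have hcb : A2.card + ((M-1) - a).choose (a-1) ≤ (M-1).choose (a-1) := by
      have := count_bound (𝒜 := A2) (X := range (M-1)) (Y := B0) (k := a - 1)
        (ground_contr hGA) (unif_contr hUA) ?_
      · rw [card_range] at this
        have : A2.card + (M - 1 - B0.card).choose (a-1) ≤ (M-1).choose (a-1) := this
        rw [hUB B0 hB0] at this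
        exact this
      · intro T' hT'
        obtain ⟨T, hT, hmT, rfl⟩ := mem_contr.1 hT'
        obtain ⟨y, hy⟩ := hX T hT B0 hB0
        rw [mem_inter] at hy
        refine ⟨y, mem_inter.2 ⟨mem_erase.2 ⟨?_, hy.1⟩, hy.2⟩⟩
        rintro rfl; exact hB0m hy.2
    have hB2c : B2.card = 0 := by rw [hB2e]; rfl
    rw [(by omega : M - 1 - a = M - a - 1)] at ihDel hcb
    omega
  · -- both contractions nonempty
    have ihContr : A2.card + B2.card + ((M-1) - (a-1)).choose (a-1) ≤ (M-1).choose (a-1) + 1 := by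
      apply ih (M-1) (by omega) (a-1) _ _ (by omega) (by omega)
        (shifted_contr hShA hGA) (shifted_contr hShB hGB) hcross2
        (unif_contr hUA) (unif_contr hUB) (ground_contr hGA) (ground_contr hGB)
        (nonempty_iff_ne_empty.2 hA2e) (nonempty_iff_ne_empty.2 hB2e)
    have hpas2 : (M - a).choose (a-1) = (M - a - 1).choose (a-2) + (M - a - 1).choose (a-1) := by
      rw [pascal' (by omega : 1 ≤ M - a) (by omega : 1 ≤ a - 1),
        (by omega : a - 1 - 1 = a - 2)]
    have hpos : 1 ≤ (M - a - 1).choose (a-2) := Nat.choose_pos (by omega)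
    have he1 : M - 1 - (a-1) = M - a := by omega
    rw [he1] at ihContr
    have he2 : M - 1 - a = M - a - 1 := by omega
    rw [he2] at ihDel
    omega

/-! ### The shifted lemmas W and S -/

lemma zero_not_mem_Icc {c : ℕ} : 0 ∉ Icc 1 c := by simp

theorem lemWS : ∀ k : ℕ,
    (∀ M G, 1 ≤ k → 2*k+1 ≤ M → Ground M G → Unif k G → Shifted G → Inter2 G →
       (∃ S ∈ G, 0 ∉ S) → G.card + 1 ≤ (M-1).choose (k-1)) ∧
    (∀ M c G, 1 ≤ k → k+1 ≤ c → c+k ≤ M → Ground M G → Unif k G → Shifted G → Inter2 G →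
       CoverC c G → G.card + (M-c-1).choose (k-1) ≤ (M-1).choose (k-1)) := by
  intro k
  induction k using Nat.strong_induction_on with
  | _ k ihk =>
  -- first the W statement
  have Wk : ∀ M G, 1 ≤ k → 2*k+1 ≤ M → Ground M G → Unif k G → Shifted G → Inter2 G →
      (∃ S ∈ G, 0 ∉ S) → G.card + 1 ≤ (M-1).choose (k-1) := by
    intro M
    induction M using Nat.strong_induction_on with
    | _ M ihM =>
    intro G hk hM hG hU hSh hI hex
    obtain ⟨S₀, hS₀, hS₀0⟩ := hex
    rcases eq_or_lt_of_le hk with hk1 | hk2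
    · -- k = 1 : impossible
      exfalso
      obtain ⟨s, hs⟩ := Finset.card_eq_one.1 (by rw [hU S₀ hS₀, ← hk1])
      subst hs
      have hs1 : 0 < s := by
        rcases Nat.eq_zero_or_pos s with rfl | h
        · exact absurd (mem_singleton_self 0) hS₀0
        · exact h
      have h0 : insert 0 (({s} : Finset ℕ).erase s) ∈ G := hSh 0 s hs1 _ hS₀ (mem_singleton_self s) hS₀0
      rw [erase_singleton, insert_empty_eq] at h0
      obtain ⟨x, hx⟩ := hI _ h0 _ hS₀
      rw [mem_inter, mem_singleton, mem_singleton] at hx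
      omega
    -- k ≥ 2
    have hX : Icc 1 k ∈ G := shiftDown hSh hk (w1 S₀) S₀ hS₀ (hU S₀ hS₀) hS₀0 le_rfl
    have hXcard : (Icc 1 k).card = k := by rw [Nat.card_Icc]; omega
    have hcov : CoverC k G := fun T hT => hI T hT _ hX
    have split := card_del_add_card_contr (M-1) G
    -- bound for the contraction, via S at level k-1
    have hS2 := (ihk (k-1) (by omega)).2 (M-1) k (contr (M-1) G) (by omega) (by omega)
      (by omega) (ground_contr hG) (unif_contr hU) (shifted_contr hSh hG)
      (inter_contr hSh hI hU hG (by omega) (by omega)) (cover_contr (by omega) hcov)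
    have hMX : (M - 1) ∉ Icc 1 k := by
      rw [mem_Icc]; omega
    rcases eq_or_lt_of_le hM with hM1 | hM2
    · -- M = 2k+1 : EKR for the deleted part
      have hekr := ekrN (ground_del hG) (unif_del hU) (inter_del hI) (by omega)
        (by omega : 2*k ≤ M - 1)
      have hpos : 1 ≤ (M-1-k-1).choose (k-2) := by
        apply Nat.choose_pos
        omega
      have hpasc : (M-1).choose (k-1) = (M-2).choose (k-2) + (M-2).choose (k-1) := by
        rw [(by omega : M - 1 = (M-2)+1), (by omega : k - 1 = (k-2)+1), Nat.choose_succ_succ]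
      rw [(by omega : M-1-1 = M-2)] at hekr
      rw [(by omega : k-1-1 = k-2), (by omega : M-1-1 = M-2),
        (by omega : M-1-k-1 = M-k-2)] at hS2
      have hpos2 : 1 ≤ (M-k-2).choose (k-2) := Nat.choose_pos (by omega)
      omega
    · -- M ≥ 2k+2 : induction on M for the deleted part
      have hWdel := ihM (M-1) (by omega) (del (M-1) G) hk (by omega) (ground_del hG)
        (unif_del hU) (shifted_del hSh hG) (inter_del hI)
        ⟨Icc 1 k, mem_filter.2 ⟨hX, hMX⟩, zero_not_mem_Icc⟩
      have hpasc : (M-1).choose (k-1) = (M-2).choose (k-2) + (M-2).choose (k-1) := by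
        rw [(by omega : M - 1 = (M-2)+1), (by omega : k - 1 = (k-2)+1), Nat.choose_succ_succ]
      rw [(by omega : k-1-1 = k-2), (by omega : M-1-1 = M-2),
        (by omega : M-1-k-1 = M-k-2)] at hS2
      rw [(by omega : M-1-1 = M-2)] at hWdel
      omega
  refine ⟨Wk, ?_⟩
  -- now the S statement
  intro M
  induction M using Nat.strong_induction_on with
  | _ M ihM =>
  intro c G hk hc hM hG hU hSh hI hcov
  rcases eq_or_lt_of_le hk with hk1 | hk2
  · -- k = 1 : G is empty
    have hempty : G = ∅ := by
      rw [eq_empty_iff_forall_notMem]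
      intro S hS
      obtain ⟨s, hs⟩ := Finset.card_eq_one.1 (by rw [hU S hS, ← hk1])
      subst hs
      obtain ⟨x, hx⟩ := hcov _ hS
      rw [mem_inter, mem_singleton] at hx
      have hs1 : 0 < s := by
        have := (mem_Icc.1 hx.2).1
        omega
      have h0 : insert 0 (({s} : Finset ℕ).erase s) ∈ G := hSh 0 s hs1 _ hS (mem_singleton_self s)
        (by rw [mem_singleton]; omega)
      rw [erase_singleton, insert_empty_eq] at h0
      obtain ⟨y, hy⟩ := hcov _ h0
      rw [mem_inter, mem_singleton] at hy
      have := (mem_Icc.1 hy.2).1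
      omega
    rw [hempty, card_empty, ← hk1]
    simp
  -- k ≥ 2
  rcases eq_or_lt_of_le hM with hM1 | hM2
  · -- base case M = c + k
    by_cases hstar : ∀ S ∈ G, 0 ∈ S
    · have := count_bound_star (𝒜 := G) (X := range M) (Y := Icc 1 c) (z := 0)
        (mem_range.2 (by omega)) zero_not_mem_Icc
        (fun x hx => mem_range.2 (by rw [mem_Icc] at hx; omega))
        hG hU hstar hcov (by omega)
      rw [card_range, Nat.card_Icc, (by omega : c + 1 - 1 = c)] at this
      rw [(by omega : M - c - 1 = M - 1 - c)]
      exact this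
    · push_neg at hstar
      obtain ⟨S₀, hS₀, h0⟩ := hstar
      have hW := Wk M G hk (by omega) hG hU hSh hI ⟨S₀, hS₀, h0⟩
      rw [(by omega : M - c - 1 = k - 1), Nat.choose_self]
      exact hW
  · -- step M ≥ c + k + 1
    have split := card_del_add_card_contr (M-1) G
    have hdel := ihM (M-1) (by omega) c (del (M-1) G) hk hc (by omega) (ground_del hG)
      (unif_del hU) (shifted_del hSh hG) (inter_del hI) (cover_del hcov)
    have hcontr := (ihk (k-1) (by omega)).2 (M-1) c (contr (M-1) G) (by omega) (by omega)
      (by omega) (ground_contr hG) (unif_contr hU) (shifted_contr hSh hG)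
      (inter_contr hSh hI hU hG (by omega) (by omega)) (cover_contr (by omega) hcov)
    have hpasc : (M-1).choose (k-1) = (M-2).choose (k-2) + (M-2).choose (k-1) := by
      rw [(by omega : M - 1 = (M-2)+1), (by omega : k - 1 = (k-2)+1), Nat.choose_succ_succ]
    have hpasc2 : (M-c-1).choose (k-1) = (M-c-2).choose (k-2) + (M-c-2).choose (k-1) := by
      rw [(by omega : M - c - 1 = (M-c-2)+1), (by omega : k - 1 = (k-2)+1), Nat.choose_succ_succ]
    rw [(by omega : M-1-1 = M-2), (by omega : M-1-c-1 = M-c-2)] at hdel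
    rw [(by omega : k-1-1 = k-2), (by omega : M-1-1 = M-2),
      (by omega : M-1-c-1 = M-c-2)] at hcontr
    omega

/-! ### shifted Hilton-Milner -/

lemma lemHMs : ∀ M k : ℕ, ∀ G : Finset (Finset ℕ), 2 ≤ k → 2*k ≤ M → Ground M G → Unif k G →
    Shifted G → Inter2 G → (∃ S ∈ G, 0 ∉ S) →
    G.card + (M-k-1).choose (k-1) ≤ (M-1).choose (k-1) + 1 := by
  intro M
  induction M using Nat.strong_induction_on with
  | _ M ihM =>
  intro k G hk hM hG hU hSh hI hex
  rcases eq_or_lt_of_le hM with hM1 | hM2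
  · -- M = 2k : EKR
    have hekr := ekrN hG hU hI (by omega) (by omega)
    rw [(by omega : M - k - 1 = k - 1), Nat.choose_self]
    omega
  -- M ≥ 2k + 1
  obtain ⟨S₀, hS₀, hS₀0⟩ := hex
  have hX : Icc 1 k ∈ G := shiftDown hSh (by omega) (w1 S₀) S₀ hS₀ (hU S₀ hS₀) hS₀0 le_rfl
  have hcov : CoverC k G := fun T hT => hI T hT _ hX
  have hMX : (M - 1) ∉ Icc 1 k := by rw [mem_Icc]; omega
  have split := card_del_add_card_contr (M-1) G
  have hdel := ihM (M-1) (by omega) k (del (M-1) G) hk (by omega) (ground_del hG)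
    (unif_del hU) (shifted_del hSh hG) (inter_del hI)
    ⟨Icc 1 k, mem_filter.2 ⟨hX, hMX⟩, zero_not_mem_Icc⟩
  have hcontr := (lemWS (k-1)).2 (M-1) k (contr (M-1) G) (by omega) (by omega)
    (by omega) (ground_contr hG) (unif_contr hU) (shifted_contr hSh hG)
    (inter_contr hSh hI hU hG (by omega) (by omega)) (cover_contr (by omega) hcov)
  have hpasc : (M-1).choose (k-1) = (M-2).choose (k-2) + (M-2).choose (k-1) := by
    rw [(by omega : M - 1 = (M-2)+1), (by omega : k - 1 = (k-2)+1), Nat.choose_succ_succ]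
  have hpasc2 : (M-k-1).choose (k-1) = (M-k-2).choose (k-2) + (M-k-2).choose (k-1) := by
    rw [(by omega : M - k - 1 = (M-k-2)+1), (by omega : k - 1 = (k-2)+1), Nat.choose_succ_succ]
  rw [(by omega : M-1-k-1 = M-k-2), (by omega : M-1-1 = M-2)] at hdel
  rw [(by omega : k-1-1 = k-2), (by omega : M-1-1 = M-2),
    (by omega : M-1-k-1 = M-k-2)] at hcontr
  omega

/-! ### shifting processes -/

lemma pairShift : ∀ N : ℕ, ∀ A B : Finset (Finset ℕ), wF A + wF B ≤ N →
    ∀ a M : ℕ, Unif a A → Unif a B → Ground M A → Ground M B → CrossInt A B →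
    ∃ A' B' : Finset (Finset ℕ), A'.card = A.card ∧ B'.card = B.card ∧ Unif a A' ∧ Unif a B' ∧
      Ground M A' ∧ Ground M B' ∧ CrossInt A' B' ∧ Shifted A' ∧ Shifted B' := by
  intro N
  induction N using Nat.strong_induction_on with
  | _ N ihN =>
  intro A B hN a M hUA hUB hGA hGB hX
  by_cases hfix : ∀ i j : ℕ, i < j → comp i j A = A ∧ comp i j B = B
  · exact ⟨A, B, rfl, rfl, hUA, hUB, hGA, hGB, hX,
      shifted_of_fixed (fun i j hij => (hfix i j hij).1),
      shifted_of_fixed (fun i j hij => (hfix i j hij).2)⟩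
  · push_neg at hfix
    obtain ⟨i, j, hij, hor⟩ := hfix
    have hor' : comp i j A ≠ A ∨ comp i j B ≠ B := by
      by_cases hA : comp i j A = A
      · exact Or.inr (hor hA)
      · exact Or.inl hA
    have hlt : wF (comp i j A) + wF (comp i j B) < wF A + wF B := by
      rcases hor' with h | h
      · have h1 := wF_comp_lt hij h
        have h2 := wF_comp_le i j hij B
        omega
      · have h1 := wF_comp_le i j hij A
        have h2 := wF_comp_lt hij h
        omega
    obtain ⟨A', B', h1, h2, h3⟩ := ihN (wF (comp i j A) + wF (comp i j B)) (by omega)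
      (comp i j A) (comp i j B) le_rfl a M (unif_comp hUA) (unif_comp hUB)
      (ground_comp hij hGA) (ground_comp hij hGB) (cross_comp hij.ne hX)
    exact ⟨A', B', h1.trans (card_comp i j hij.ne A), h2.trans (card_comp i j hij.ne B), h3⟩

def NoCommon (F : Finset (Finset ℕ)) : Prop := ∀ x : ℕ, ∃ S ∈ F, x ∉ S

/-! ### the two-element-cover case -/

lemma lemT : ∀ k M : ℕ, ∀ F : Finset (Finset ℕ), ∀ x y : ℕ, 2 ≤ k → 2*k+1 ≤ M →
    x ≠ y → x < M → y < M → Ground M F → Unif k F → Inter2 F → NoCommon F →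
    (∀ S ∈ F, x ∈ S ∨ y ∈ S) →
    F.card + (M-k-1).choose (k-1) ≤ (M-1).choose (k-1) + 1 := by
  intro k M F x y hk hM hxy hxM hyM hG hU hI hNC hcov
  classical
  set H1 := F.filter (fun S => x ∈ S ∧ y ∉ S) with hH1
  set H2 := F.filter (fun S => y ∈ S ∧ x ∉ S) with hH2
  set H12 := F.filter (fun S => x ∈ S ∧ y ∈ S) with hH12
  have hsplit : F.card = H1.card + H2.card + H12.card := by
    have e0 := card_filter_add_card_filter_not (s := F) (p := fun S => x ∈ S)
    have e1 := card_filter_add_card_filter_not (s := F.filter (fun S => x ∈ S))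
      (p := fun S => y ∈ S)
    rw [filter_filter, filter_filter] at e1
    have e2 : F.filter (fun S => ¬ x ∈ S) = H2 := by
      rw [hH2]
      ext T
      simp only [mem_filter]
      constructor
      · rintro ⟨hT, h⟩
        rcases hcov T hT with h' | h'
        · exact absurd h' h
        · exact ⟨hT, h', h⟩
      · rintro ⟨hT, h1, h2⟩
        exact ⟨hT, h2⟩
    have e3 : F.filter (fun S => x ∈ S ∧ y ∈ S) = H12 := rfl
    have e4 : (F.filter (fun S => x ∈ S ∧ ¬ y ∈ S)) = H1 := rfl
    rw [e2] at e0
    rw [e3, e4] at e1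
    omega
  -- nonemptiness
  obtain ⟨Sx, hSx, hSxx⟩ := hNC x
  obtain ⟨Sy, hSy, hSyy⟩ := hNC y
  have hSxH2 : Sx ∈ H2 := by
    rw [hH2, mem_filter]
    rcases hcov Sx hSx with h | h
    · exact absurd h hSxx
    · exact ⟨hSx, h, hSxx⟩
  have hSyH1 : Sy ∈ H1 := by
    rw [hH1, mem_filter]
    rcases hcov Sy hSy with h | h
    · exact ⟨hSy, h, hSyy⟩
    · exact absurd h hSyy
  -- the relabelling function
  set D := (range M) \ {x, y} with hD
  have hDcard : D.card = M - 2 := by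
    rw [hD, card_sdiff_of_subset]
    · rw [card_range, card_insert_of_notMem (by simpa using hxy), card_singleton]
    · intro z hz
      rcases mem_insert.1 hz with rfl | hz'
      · exact mem_range.2 hxM
      · rw [mem_singleton] at hz'
        subst hz'
        exact mem_range.2 hyM
  set f : ℕ → ℕ := fun z => if z ∈ D then (D.filter (· < z)).card else M + z with hf
  have hrank_lt : ∀ z ∈ D, (D.filter (· < z)).card < M - 2 := by
    intro z hz
    have : D.filter (· < z) ⊆ D.erase z := by
      intro w hw
      rw [mem_filter] at hw
      exact mem_erase.2 ⟨by omega, hw.1⟩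
    calc (D.filter (· < z)).card ≤ (D.erase z).card := card_le_card this
      _ = D.card - 1 := card_erase_of_mem hz
      _ < M - 2 := by omega
  have hrank_mono : ∀ u ∈ D, ∀ v ∈ D, u < v →
      (D.filter (· < u)).card < (D.filter (· < v)).card := by
    intro u hu v hv huv
    apply card_lt_card
    rw [ssubset_iff_of_subset]
    · exact ⟨u, mem_filter.2 ⟨hu, huv⟩, fun h => by
        have := (mem_filter.1 h).2
        omega⟩
    · intro w hw
      rw [mem_filter] at hw ⊢
      exact ⟨hw.1, by omega⟩
  have fInj : Function.Injective f := by
    intro u v huv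
    have huv' : (if u ∈ D then (D.filter (· < u)).card else M + u)
        = (if v ∈ D then (D.filter (· < v)).card else M + v) := huv
    clear huv
    rename' huv' => huv
    by_cases hu : u ∈ D <;> by_cases hv : v ∈ D
    · rw [if_pos hu, if_pos hv] at huv
      by_contra hne
      rcases Nat.lt_or_ge u v with h | h
      · have := hrank_mono u hu v hv h; omega
      · have : v < u := by omega
        have := hrank_mono v hv u hu this; omega
    · rw [if_pos hu, if_neg hv] at huv
      have := hrank_lt u hu
      omega
    · rw [if_neg hu, if_pos hv] at huv
      have := hrank_lt v hv
      omega
    · rw [if_neg hu, if_neg hv] at huv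
      omega
  have hfD : ∀ z ∈ D, f z < M - 2 := by
    intro z hz
    rw [hf]
    simp only
    rw [if_pos hz]
    exact hrank_lt z hz
  -- the reduced families
  have hsub1 : ∀ S ∈ H1, S.erase x ⊆ D := by
    intro S hS w hw
    rw [hH1, mem_filter] at hS
    rw [mem_erase] at hw
    rw [hD, mem_sdiff]
    refine ⟨hG S hS.1 hw.2, ?_⟩
    intro hmem
    rcases mem_insert.1 hmem with rfl | h
    · exact hw.1 rfl
    · rw [mem_singleton] at h
      subst h
      exact hS.2.2 hw.2
  have hsub2 : ∀ S ∈ H2, S.erase y ⊆ D := by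
    intro S hS w hw
    rw [hH2, mem_filter] at hS
    rw [mem_erase] at hw
    rw [hD, mem_sdiff]
    refine ⟨hG S hS.1 hw.2, ?_⟩
    intro hmem
    rcases mem_insert.1 hmem with rfl | h
    · exact hS.2.2 hw.2
    · rw [mem_singleton] at h
      subst h
      exact hw.1 rfl
  set A1 := H1.image (fun S => (S.erase x).image f) with hA1
  set B1 := H2.image (fun S => (S.erase y).image f) with hB1
  have hcard1 : A1.card = H1.card := by
    apply card_image_of_injOn
    intro S hS T hT h
    rw [mem_coe] at hS hT
    have h' := image_injective fInj h
    have hx1 : x ∈ S := (mem_filter.1 hS).2.1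
    have hx2 : x ∈ T := (mem_filter.1 hT).2.1
    have := congrArg (insert x) h'
    rwa [insert_erase hx1, insert_erase hx2] at this
  have hcard2 : B1.card = H2.card := by
    apply card_image_of_injOn
    intro S hS T hT h
    rw [mem_coe] at hS hT
    have h' := image_injective fInj h
    have hy1 : y ∈ S := (mem_filter.1 hS).2.1
    have hy2 : y ∈ T := (mem_filter.1 hT).2.1
    have := congrArg (insert y) h'
    rwa [insert_erase hy1, insert_erase hy2] at this
  have hUA1 : Unif (k-1) A1 := by
    intro S hS
    obtain ⟨T, hT, rfl⟩ := mem_image.1 hS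
    rw [card_image_of_injective _ fInj, card_erase_of_mem (mem_filter.1 hT).2.1,
      hU T (mem_filter.1 hT).1]
  have hUB1 : Unif (k-1) B1 := by
    intro S hS
    obtain ⟨T, hT, rfl⟩ := mem_image.1 hS
    rw [card_image_of_injective _ fInj, card_erase_of_mem (mem_filter.1 hT).2.1,
      hU T (mem_filter.1 hT).1]
  have hGA1 : Ground (M-2) A1 := by
    intro S hS
    obtain ⟨T, hT, rfl⟩ := mem_image.1 hS
    intro w hw
    obtain ⟨u, hu, rfl⟩ := mem_image.1 hw
    exact mem_range.2 (hfD u (hsub1 T hT hu))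
  have hGB1 : Ground (M-2) B1 := by
    intro S hS
    obtain ⟨T, hT, rfl⟩ := mem_image.1 hS
    intro w hw
    obtain ⟨u, hu, rfl⟩ := mem_image.1 hw
    exact mem_range.2 (hfD u (hsub2 T hT hu))
  have hXAB : CrossInt A1 B1 := by
    intro S' hS' T' hT'
    obtain ⟨S, hS, rfl⟩ := mem_image.1 hS'
    obtain ⟨T, hT, rfl⟩ := mem_image.1 hT'
    rw [← image_inter _ _ fInj]
    obtain ⟨z, hz⟩ := hI S (mem_filter.1 hS).1 T (mem_filter.1 hT).1
    rw [mem_inter] at hz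
    have hzx : z ≠ x := by
      rintro rfl
      exact (mem_filter.1 hT).2.2 hz.2
    have hzy : z ≠ y := by
      rintro rfl
      exact (mem_filter.1 hS).2.2 hz.1
    exact ⟨f z, mem_image_of_mem f (mem_inter.2
      ⟨mem_erase.2 ⟨hzx, hz.1⟩, mem_erase.2 ⟨hzy, hz.2⟩⟩)⟩
  obtain ⟨A2, B2, hc1, hc2, hu1, hu2, hg1, hg2, hx12, hsh1, hsh2⟩ :=
    pairShift (wF A1 + wF B1) A1 B1 le_rfl (k-1) (M-2) hUA1 hUB1 hGA1 hGB1 hXAB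
  have hA2ne : A2.Nonempty := by
    rw [← card_pos, hc1, hcard1]
    exact card_pos.2 ⟨Sy, hSyH1⟩
  have hB2ne : B2.Nonempty := by
    rw [← card_pos, hc2, hcard2]
    exact card_pos.2 ⟨Sx, hSxH2⟩
  have hC := lemC (M-2) (k-1) A2 B2 (by omega) (by omega) hsh1 hsh2 hx12 hu1 hu2 hg1 hg2
    hA2ne hB2ne
  -- bound for H12
  have hH12b : H12.card ≤ (M-2).choose (k-2) := by
    have hinj : (H12.image (fun S => (S.erase x).erase y)).card = H12.card := by
      apply card_image_of_injOn
      intro S hS T hT h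
      rw [mem_coe, hH12, mem_filter] at hS hT
      have h' : (S.erase y).erase x = (T.erase y).erase x := by
        rw [erase_right_comm, erase_right_comm (s := T)]
        exact h
      have e1 := congrArg (insert x) h'
      rw [insert_erase (mem_erase.2 ⟨hxy, hS.2.1⟩),
        insert_erase (mem_erase.2 ⟨hxy, hT.2.1⟩)] at e1
      have e2 := congrArg (insert y) e1
      rwa [insert_erase hS.2.2, insert_erase hT.2.2] at e2
    rw [← hinj]
    have := card_le_powersetCard (𝒜 := H12.image (fun S => (S.erase x).erase y)) (X := D)
      (k := k - 2) ?_ ?_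
    · rwa [hDcard] at this
    · intro S hS
      obtain ⟨T, hT, rfl⟩ := mem_image.1 hS
      intro w hw
      rw [mem_erase, mem_erase] at hw
      rw [hD, mem_sdiff]
      refine ⟨hG T (mem_filter.1 hT).1 hw.2.2, ?_⟩
      intro hmem
      rcases mem_insert.1 hmem with rfl | h
      · exact hw.2.1 rfl
      · rw [mem_singleton] at h
        exact hw.1 h
    · intro S hS
      obtain ⟨T, hT, rfl⟩ := mem_image.1 hS
      rw [mem_filter] at hT
      rw [card_erase_of_mem (mem_erase.2 ⟨hxy.symm, hT.2.2⟩), card_erase_of_mem hT.2.1,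
        hU T hT.1]
      omega
  have hpasc : (M-1).choose (k-1) = (M-2).choose (k-2) + (M-2).choose (k-1) := by
    rw [(by omega : M - 1 = (M-2)+1), (by omega : k - 1 = (k-2)+1), Nat.choose_succ_succ]
  rw [(by omega : M-2-(k-1) = M-k-1)] at hC
  rw [hc1, hc2, hcard1, hcard2] at hC
  omega

/-! ### full Hilton-Milner -/

lemma mainRed : ∀ N : ℕ, ∀ F : Finset (Finset ℕ), wF F ≤ N → ∀ k M : ℕ, 2 ≤ k → 2*k+1 ≤ M →
    Ground M F → Unif k F → Inter2 F → NoCommon F →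
    F.card + (M-k-1).choose (k-1) ≤ (M-1).choose (k-1) + 1 := by
  intro N
  induction N using Nat.strong_induction_on with
  | _ N ihN =>
  intro F hN k M hk hM hG hU hI hNC
  by_cases hfix : ∀ i j : ℕ, i < j → comp i j F = F
  · have hSh := shifted_of_fixed hfix
    obtain ⟨S, hS, h0⟩ := hNC 0
    exact lemHMs M k F hk (by omega) hG hU hSh hI ⟨S, hS, h0⟩
  · push_neg at hfix
    obtain ⟨i, j, hij, hne⟩ := hfix
    have hchange : ∃ S ∈ F, shStep i j F S ≠ S := by
      by_contra h
      push_neg at h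
      apply hne
      rw [comp]
      have : F.image (shStep i j F) = F.image id := image_congr (fun z hz => h z hz)
      rw [this, image_id]
    obtain ⟨Sc, hSc, hScne⟩ := hchange
    have hcond : j ∈ Sc ∧ i ∉ Sc ∧ sij i j Sc ∉ F := by
      by_contra h
      rw [shStep, if_neg h] at hScne
      exact hScne rfl
    have hjM : j < M := mem_range.1 (hG Sc hSc hcond.1)
    have hI' : CrossInt F F := hI
    have hF'I : Inter2 (comp i j F) := cross_comp hij.ne hI'
    by_cases hNC' : NoCommon (comp i j F)
    · have := ihN (wF (comp i j F)) (by have := wF_comp_lt hij hne; omega)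
        (comp i j F) le_rfl k M hk hM (ground_comp hij hG) (unif_comp hU) hF'I hNC'
      rwa [card_comp i j hij.ne] at this
    · -- a common element appeared : F is covered by {i, j}
      rw [NoCommon] at hNC'
      push_neg at hNC'
      obtain ⟨z, hz⟩ := hNC'
      have hzi : z = i := by
        by_contra hzne
        -- then z is common to all of F, contradiction
        obtain ⟨S, hS, hzS⟩ := hNC z
        apply hzS
        have hmem : shStep i j F S ∈ comp i j F := mem_image_of_mem _ hS
        have hzmem := hz _ hmem
        rw [shStep] at hzmem
        by_cases hc : j ∈ S ∧ i ∉ S ∧ sij i j S ∉ F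
        · rw [if_pos hc] at hzmem
          rcases mem_insert.1 hzmem with h | h
          · exact absurd h hzne
          · exact mem_of_mem_erase h
        · rwa [if_neg hc] at hzmem
      rw [hzi] at hz
      have hcov : ∀ S ∈ F, i ∈ S ∨ j ∈ S := by
        intro S hS
        have hmem : shStep i j F S ∈ comp i j F := mem_image_of_mem _ hS
        have hzmem := hz _ hmem
        by_cases hc : j ∈ S ∧ i ∉ S ∧ sij i j S ∉ F
        · exact Or.inr hc.1
        · rw [shStep, if_neg hc] at hzmem
          exact Or.inl hzmem
      exact lemT k M F i j hk hM hij.ne (by omega) hjM hG hU hI hNC hcov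

lemma HMfull {k M : ℕ} {F : Finset (Finset ℕ)} (hk : 2 ≤ k) (hM : 2*k+1 ≤ M)
    (hG : Ground M F) (hU : Unif k F) (hI : Inter2 F) (hNC : NoCommon F) :
    F.card + (M-k-1).choose (k-1) ≤ (M-1).choose (k-1) + 1 :=
  mainRed (wF F) F le_rfl k M hk hM hG hU hI hNC

/-! ### the free part bound -/

lemma lemL2 {m n : ℕ} {F : Finset (Finset ℕ)} {A B : Finset ℕ}
    (hn : 1 ≤ n) (hm : 2*n+1 ≤ m)
    (hG : Ground m F) (hU : Unif n F) (hI : Inter2 F)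
    (hAg : A ⊆ range m) (hBg : B ⊆ range m) (hcA : A.card = n) (hcB : B.card = n)
    (hAB : A ∩ B = ∅)
    (hFA : ∀ S ∈ F, (S ∩ A).Nonempty) (hFB : ∀ S ∈ F, (S ∩ B).Nonempty) :
    F.card + (m-n-1).choose (n-1) ≤ (m-1).choose (n-1) := by
  rcases eq_or_lt_of_le hn with hn1 | hn2
  · -- n = 1 : F must be empty
    have hF : F = ∅ := by
      rw [eq_empty_iff_forall_notMem]
      intro S hS
      obtain ⟨x, hx⟩ := hFA S hS
      obtain ⟨y, hy⟩ := hFB S hS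
      rw [mem_inter] at hx hy
      obtain ⟨z, hz⟩ := Finset.card_eq_one.1 (by rw [hU S hS, ← hn1])
      subst hz
      rw [mem_singleton] at hx hy
      have : x ∈ A ∩ B := mem_inter.2 ⟨hx.2, by rw [hx.1, ← hy.1]; exact hy.2⟩
      rw [hAB] at this
      exact notMem_empty _ this
    rw [hF, card_empty, ← hn1]
    simp
  -- n ≥ 2
  have hBF : B ∉ F := by
    intro h
    obtain ⟨x, hx⟩ := hFA B h
    rw [inter_comm] at hx
    rw [hAB] at hx
    exact notMem_empty _ hx
  set H := insert B F with hH
  have hHcard : H.card = F.card + 1 := card_insert_of_notMem hBF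
  have hHG : Ground m H := by
    intro S hS
    rcases mem_insert.1 hS with rfl | h
    · exact hBg
    · exact hG S h
  have hHU : Unif n H := by
    intro S hS
    rcases mem_insert.1 hS with rfl | h
    · exact hcB
    · exact hU S h
  have hHI : Inter2 H := by
    intro S hS T hT
    rcases mem_insert.1 hS with rfl | h1 <;> rcases mem_insert.1 hT with rfl | h2
    · rw [inter_self]
      rw [← card_pos, hcB]
      omega
    · rw [inter_comm]
      exact hFB T h2
    · exact hFB S h1
    · exact hI S h1 T h2
  by_cases hNC : NoCommon H
  · have := HMfull (k := n) (M := m) (by omega) (by omega) hHG hHU hHI hNC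
    omega
  · rw [NoCommon] at hNC
    push_neg at hNC
    obtain ⟨x, hx⟩ := hNC
    have hxB : x ∈ B := hx B (mem_insert_self _ _)
    have hxA : x ∉ A := by
      intro h
      have : x ∈ A ∩ B := mem_inter.2 ⟨h, hxB⟩
      rw [hAB] at this
      exact notMem_empty _ this
    have := count_bound_star (𝒜 := F) (X := range m) (Y := A) (z := x)
      (hBg hxB) hxA hAg hG hU (fun S hS => hx S (mem_insert_of_mem hS)) hFA (by omega)
    rw [card_range, hcA] at this
    rw [(by omega : m - n - 1 = m - 1 - n)]
    exact this

end HMX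

end HMXsec

/-- `φ^a_b(KG(m,n)) ≥ (C(m,n) - a·C(m-1,n-1)) / (C(m-1,n-1) - C(m-n-1,n-1))`. -/
theorem stmt16 (m n a b : ℕ) (hn : 1 ≤ n) (hm : 2 * n < m) (hb : 1 ≤ b) :
    ∀ t : ℕ, ABFree (kneser m n) a b t →
      ((Nat.choose m n : ℚ) - a * Nat.choose (m - 1) (n - 1)) /
          ((Nat.choose (m - 1) (n - 1) : ℚ) - Nat.choose (m - n - 1) (n - 1)) ≤ t := by
  classical
  intro t habf
  obtain ⟨P, e, hpart, hindep, hfree, hedge, hbb⟩ := habf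
  rcases eq_or_lt_of_le hn with hn1 | hn2
  · -- n = 1 : the denominator is zero
    rw [← hn1]
    rw [(rfl : (1:ℕ) - 1 = 0), Nat.choose_zero_right, Nat.choose_zero_right,
      Nat.cast_one, sub_self, div_zero]
    exact Nat.cast_nonneg t
  -- n ≥ 2
  set α := (m-1).choose (n-1) with hα
  set β := (m-n-1).choose (n-1) with hβ
  have hβα : β < α := by
    have h1 : β ≤ (m-2).choose (n-1) := Nat.choose_le_choose _ (by omega)
    have h2 : (m-1).choose (n-1) = (m-2).choose (n-2) + (m-2).choose (n-1) := by
      rw [(by omega : m - 1 = (m-2)+1), (by omega : n - 1 = (n-2)+1), Nat.choose_succ_succ]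
    have h3 : 0 < (m-2).choose (n-2) := Nat.choose_pos (by omega)
    omega
  have hcardV : Fintype.card {A : Finset (Fin m) // A.card = n} = m.choose n := by
    rw [Fintype.card_finset_len, Fintype.card_fin]
  set c : Fin t → ℕ := fun i => (Finset.univ.filter (fun v => v ∈ P i)).card with hc
  -- the counts sum to the number of vertices
  have huniq : ∀ v : {A : Finset (Fin m) // A.card = n},
      (Finset.univ.filter (fun i : Fin t => v ∈ P i)).card = 1 := by
    intro v
    obtain ⟨i₀, hi₀, hun⟩ := hpart v
    rw [Finset.card_eq_one]
    refine ⟨i₀, ?_⟩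
    ext i1
    simp only [Finset.mem_filter, Finset.mem_univ, true_and, Finset.mem_singleton]
    exact ⟨fun h => hun i1 h, fun h => h ▸ hi₀⟩
  have hsum : ∑ i : Fin t, c i = m.choose n := by
    calc ∑ i : Fin t, c i
        = ∑ i : Fin t, ∑ v : {A : Finset (Fin m) // A.card = n},
            (if v ∈ P i then 1 else 0) := by
          refine Finset.sum_congr rfl fun i _ => ?_
          show (Finset.univ.filter (fun v => v ∈ P i)).card = _
          rw [Finset.card_filter]
      _ = ∑ v : {A : Finset (Fin m) // A.card = n}, ∑ i : Fin t,
            (if v ∈ P i then 1 else 0) := Finset.sum_comm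
      _ = ∑ _v : {A : Finset (Fin m) // A.card = n}, 1 := by
          refine Finset.sum_congr rfl fun v _ => ?_
          rw [← Finset.card_filter, huniq v]
      _ = m.choose n := by
          rw [Finset.sum_const, smul_eq_mul, mul_one, Finset.card_univ, hcardV]
  -- the ℕ-labelled family for each colour class
  set Gfam : Fin t → Finset (Finset ℕ) := fun i =>
    ((Finset.univ.filter (fun v => v ∈ P i)).image (fun v => v.1)).image
      (fun s => s.image Fin.val) with hGfam
  have hGcard : ∀ i, (Gfam i).card = c i := by
    intro i
    rw [hGfam]
    rw [Finset.card_image_of_injective _ (Finset.image_injective Fin.val_injective),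
      Finset.card_image_of_injective _ Subtype.val_injective]
  have hGmem : ∀ i S, S ∈ Gfam i ↔
      ∃ v : {A : Finset (Fin m) // A.card = n}, v ∈ P i ∧ S = v.1.image Fin.val := by
    intro i S
    rw [hGfam]
    simp only [Finset.mem_image, Finset.mem_filter, Finset.mem_univ, true_and]
    constructor
    · rintro ⟨s, ⟨v, hv, rfl⟩, rfl⟩
      exact ⟨v, hv, rfl⟩
    · rintro ⟨v, hv, rfl⟩
      exact ⟨v.1, ⟨v, hv, rfl⟩, rfl⟩
  have hGground : ∀ i, HMX.Ground m (Gfam i) := by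
    intro i S hS
    obtain ⟨v, hv, rfl⟩ := (hGmem i S).1 hS
    intro x hx
    obtain ⟨u, hu, rfl⟩ := Finset.mem_image.1 hx
    exact Finset.mem_range.2 u.2
  have hGunif : ∀ i, HMX.Unif n (Gfam i) := by
    intro i S hS
    obtain ⟨v, hv, rfl⟩ := (hGmem i S).1 hS
    rw [Finset.card_image_of_injective _ Fin.val_injective, v.2]
  have hGinter : ∀ i, HMX.Inter2 (Gfam i) := by
    intro i S hS T hT
    obtain ⟨v, hv, rfl⟩ := (hGmem i S).1 hS
    obtain ⟨w, hw, rfl⟩ := (hGmem i T).1 hT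
    by_cases hvw : v = w
    · subst hvw
      rw [Finset.inter_self, ← Finset.card_pos,
        Finset.card_image_of_injective _ Fin.val_injective, v.2]
      omega
    · have hnadj := hindep i hv hw
      have hnd : ¬ (v ≠ w ∧ Disjoint v.1 w.1) := hnadj
      have hd : ¬ Disjoint v.1 w.1 := by
        intro hD
        exact hnd ⟨hvw, hD⟩
      obtain ⟨x, hx1, hx2⟩ := Finset.not_disjoint_iff.1 hd
      exact ⟨x.val, Finset.mem_inter.2
        ⟨Finset.mem_image_of_mem _ hx1, Finset.mem_image_of_mem _ hx2⟩⟩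
  -- EKR bound for each colour class
  have hEKR : ∀ i : Fin t, c i ≤ α := by
    intro i
    have := HMX.ekrN (hGground i) (hGunif i) (hGinter i) (by omega) (by omega)
    rw [hGcard i] at this
    exact this
  -- the free colour classes obey the stronger bound
  have hFree : ∀ i : Fin (t - a), c (Fin.castLE (Nat.sub_le t a) i) + β ≤ α := by
    intro i
    set i' : Fin t := Fin.castLE (Nat.sub_le t a) i with hi'
    obtain ⟨hadj, hempty⟩ := hedge i
    have hne : (e i).1 ≠ (e i).2 := hadj.1
    have hdisj : Disjoint (e i).1.1 (e i).2.1 := hadj.2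
    have hnbr : ∀ w, w ∈ P i' →
        ¬ Disjoint w.1 (e i).1.1 ∧ ¬ Disjoint w.1 (e i).2.1 := by
      intro w hw
      constructor
      · intro hD
        have hwu : w ∈ (kneser m n).neighborSet (e i).1 ∪ (kneser m n).neighborSet (e i).2 := by
          by_cases hwe : w = (e i).1
          · right
            rw [SimpleGraph.mem_neighborSet]
            subst hwe
            exact ⟨hne.symm, hdisj.symm⟩
          · left
            rw [SimpleGraph.mem_neighborSet]
            exact ⟨fun h => hwe h.symm, hD.symm⟩
        exact Set.eq_empty_iff_forall_notMem.1 hempty w ⟨hwu, hw⟩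
      · intro hD
        have hwu : w ∈ (kneser m n).neighborSet (e i).1 ∪ (kneser m n).neighborSet (e i).2 := by
          by_cases hwe : w = (e i).2
          · left
            rw [SimpleGraph.mem_neighborSet]
            subst hwe
            exact ⟨hne, hdisj⟩
          · right
            rw [SimpleGraph.mem_neighborSet]
            exact ⟨fun h => hwe h.symm, hD.symm⟩
        exact Set.eq_empty_iff_forall_notMem.1 hempty w ⟨hwu, hw⟩
    have hL2 := HMX.lemL2 (m := m) (n := n) (F := Gfam i')
      (A := (e i).1.1.image Fin.val) (B := (e i).2.1.image Fin.val)
      hn (by omega) (hGground i') (hGunif i') (hGinter i')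
      (fun x hx => by
        obtain ⟨u, hu, rfl⟩ := Finset.mem_image.1 hx
        exact Finset.mem_range.2 u.2)
      (fun x hx => by
        obtain ⟨u, hu, rfl⟩ := Finset.mem_image.1 hx
        exact Finset.mem_range.2 u.2)
      (by rw [Finset.card_image_of_injective _ Fin.val_injective, (e i).1.2])
      (by rw [Finset.card_image_of_injective _ Fin.val_injective, (e i).2.2])
      (by
        rw [← Finset.image_inter _ _ Fin.val_injective,
          Finset.disjoint_iff_inter_eq_empty.1 hdisj, Finset.image_empty])
      (by
        intro S hS
        obtain ⟨w, hw, rfl⟩ := (hGmem i' S).1 hS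
        obtain ⟨x, hx1, hx2⟩ := Finset.not_disjoint_iff.1 (hnbr w hw).1
        exact ⟨x.val, Finset.mem_inter.2
          ⟨Finset.mem_image_of_mem _ hx1, Finset.mem_image_of_mem _ hx2⟩⟩)
      (by
        intro S hS
        obtain ⟨w, hw, rfl⟩ := (hGmem i' S).1 hS
        obtain ⟨x, hx1, hx2⟩ := Finset.not_disjoint_iff.1 (hnbr w hw).2
        exact ⟨x.val, Finset.mem_inter.2
          ⟨Finset.mem_image_of_mem _ hx1, Finset.mem_image_of_mem _ hx2⟩⟩)
    rw [hGcard i'] at hL2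
    exact hL2
  -- convert to a bound for every index below t - a
  have hper : ∀ i : Fin t, (i : ℕ) < t - a → c i + β ≤ α := by
    intro i hi
    have := hFree ⟨(i : ℕ), hi⟩
    have heq : Fin.castLE (Nat.sub_le t a) (⟨(i : ℕ), hi⟩ : Fin (t - a)) = i := by
      apply Fin.ext
      rfl
    rwa [heq] at this
  -- the main ℕ inequality
  set g : ℕ → ℕ := fun j => if h : j < t then c ⟨j, h⟩ else 0 with hg
  have hgval : ∀ (j : ℕ) (h : j < t), g j = c ⟨j, h⟩ := by
    intro j h
    rw [hg]
    simp only
    rw [dif_pos h]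
  have hgsum : ∑ j ∈ Finset.range t, g j = m.choose n := by
    rw [← Fin.sum_univ_eq_sum_range, ← hsum]
    refine Finset.sum_congr rfl fun i _ => ?_
    rw [hgval (i : ℕ) i.isLt]
  have hb1 : ∑ j ∈ Finset.range (t-a), g j ≤ (t-a) * (α - β) := by
    have hle : ∀ j ∈ Finset.range (t-a), g j ≤ α - β := by
      intro j hj
      rw [Finset.mem_range] at hj
      have hjt : j < t := by omega
      have hp := hper ⟨j, hjt⟩ (by simpa using hj)
      rw [hgval j hjt]
      omega
    have := Finset.sum_le_card_nsmul (Finset.range (t-a)) g (α - β) hle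
    rwa [Finset.card_range, smul_eq_mul] at this
  have hb2 : ∑ j ∈ Finset.Ico (t-a) t, g j ≤ (t - (t-a)) * α := by
    have hle : ∀ j ∈ Finset.Ico (t-a) t, g j ≤ α := by
      intro j hj
      rw [Finset.mem_Ico] at hj
      have hjt : j < t := hj.2
      rw [hgval j hjt]
      exact hEKR _
    have := Finset.sum_le_card_nsmul (Finset.Ico (t-a) t) g α hle
    rwa [Nat.card_Ico, smul_eq_mul] at this
  have hsplit := Finset.sum_Ico_consecutive g (Nat.zero_le (t-a)) (Nat.sub_le t a)
  rw [← Finset.range_eq_Ico, ← Finset.range_eq_Ico, hgsum] at hsplit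
  have hN : m.choose n ≤ (t-a) * (α - β) + (t - (t-a)) * α := by omega
  -- pass to ℚ
  have hQden : (0:ℚ) < (α:ℚ) - (β:ℚ) := by
    rw [sub_pos]
    exact_mod_cast hβα
  rw [div_le_iff₀ hQden]
  have hQ : (m.choose n : ℚ) ≤ (t:ℚ) * ((α:ℚ) - β) + (a:ℚ) * α := by
    rcases le_or_gt a t with hat | hat
    · have h1 : ((t - a : ℕ) : ℚ) = (t:ℚ) - a := by
        push_cast [Nat.cast_sub hat]
        ring
      have h2 : ((α - β : ℕ) : ℚ) = (α:ℚ) - β := by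
        push_cast [Nat.cast_sub hβα.le]
        ring
      have h3 : t - (t - a) = a := by omega
      have h4 : (m.choose n : ℚ) ≤ (((t-a) * (α - β) + (t - (t-a)) * α : ℕ) : ℚ) :=
        Nat.cast_le.2 hN
      rw [h3] at h4
      push_cast [Nat.cast_sub hat, Nat.cast_sub hβα.le] at h4
      have h5 : ((t:ℚ) - a) * ((α:ℚ) - β) ≤ (t:ℚ) * ((α:ℚ) - β) := by
        apply mul_le_mul_of_nonneg_right _ hQden.le
        have : (0:ℚ) ≤ (a:ℚ) := Nat.cast_nonneg a
        linarith
      linarith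
    · -- t < a
      have hN2 : m.choose n ≤ t * α := by
        have hle : ∀ j ∈ Finset.range t, g j ≤ α := by
          intro j hj
          rw [Finset.mem_range] at hj
          rw [hgval j hj]
          exact hEKR _
        have := Finset.sum_le_card_nsmul (Finset.range t) g α hle
        rw [Finset.card_range, smul_eq_mul, hgsum] at this
        exact this
      have h4 : (m.choose n : ℚ) ≤ (t:ℚ) * α := by exact_mod_cast hN2
      have h5 : (t:ℚ) * (β:ℚ) ≤ (a:ℚ) * (α:ℚ) := by
        apply mul_le_mul
        · exact_mod_cast hat.le
        · exact_mod_cast hβα.le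
        · exact Nat.cast_nonneg β
        · exact Nat.cast_nonneg a
      have h6 : (t:ℚ) * α = (t:ℚ) * ((α:ℚ) - β) + (t:ℚ) * β := by ring
      linarith
  linarith
end

section
/- Let n > s ≥ 0 and m ≥ (s+2)(n−s). Every free independent set F of the generalized Kneser graph KG(m,n,s) satisfies |F| ≤ C(2n, s+2)·C(m−s−2, n−s−2). -/
open SimpleGraph

variable {V : Type*} {W : Type*}

lemma aux18 (m n s : ℕ) (F M M' : Set {A : Finset (Fin m) // A.card = n})
    (hM : IsMaxIndep (genKneser m n s) M) (hM' : IsMaxIndep (genKneser m n s) M')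
    (hFM : F ⊆ M) (hFM' : F ⊆ M')
    (A : {A : Finset (Fin m) // A.card = n}) (hA : A ∈ M) (hA' : A ∉ M') :
    F.ncard ≤ Nat.choose (2 * n) (s + 2) * Nat.choose (m - s - 2) (n - s - 2) := by
  classical
  -- M' ∪ {A} is not independent
  have hins : ¬ IsIndep (genKneser m n s) (insert A M') := by
    intro h
    have heq := hM'.2 (insert A M') h (Set.subset_insert _ _)
    rw [heq] at hA'
    exact hA' (Set.mem_insert _ _)
  -- obtain a neighbor B of A inside M'
  obtain ⟨B, hBM', hAB⟩ : ∃ B, B ∈ M' ∧ (genKneser m n s).Adj A B := by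
    by_contra hc
    push_neg at hc
    apply hins
    intro u hu v hv hadj
    rcases Set.mem_insert_iff.mp hu with hu1 | hu1
    · rcases Set.mem_insert_iff.mp hv with hv1 | hv1
      · exact (genKneser m n s).loopless.irrefl _ (hu1 ▸ hv1 ▸ hadj)
      · exact hc v hv1 (hu1 ▸ hadj)
    · rcases Set.mem_insert_iff.mp hv with hv1 | hv1
      · exact hc u hu1 (hv1 ▸ hadj.symm)
      · exact hM'.1 hu1 hv1 hadj
  set U : Finset (Fin m) := A.1 ∪ B.1 with hUdef
  have hUcard : U.card ≤ 2 * n := by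
    calc U.card ≤ A.1.card + B.1.card := Finset.card_union_le _ _
      _ = 2 * n := by rw [A.2, B.2]; ring
  -- every member of F meets U in at least s+2 elements
  have hkey : ∀ C ∈ F, s + 2 ≤ (C.1 ∩ U).card := by
    intro C hC
    have hCA : ¬ (genKneser m n s).Adj C A := hM.1 (hFM hC) hA
    have hCB : ¬ (genKneser m n s).Adj C B := hM'.1 (hFM' hC) hBM'
    have hCneA : C ≠ A := fun h => hA' (h ▸ hFM' hC)
    have hCneB : C ≠ B := fun h => hM.1 hA (hFM hC) (h.symm ▸ hAB)
    have h1 : s < (C.1 ∩ A.1).card := by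
      by_contra h
      push_neg at h
      exact hCA (⟨hCneA, h⟩ : C ≠ A ∧ (C.1 ∩ A.1).card ≤ s)
    have h2 : s < (C.1 ∩ B.1).card := by
      by_contra h
      push_neg at h
      exact hCB (⟨hCneB, h⟩ : C ≠ B ∧ (C.1 ∩ B.1).card ≤ s)
    have hABcard : (A.1 ∩ B.1).card ≤ s := (hAB : A ≠ B ∧ (A.1 ∩ B.1).card ≤ s).2
    have hdist : C.1 ∩ U = (C.1 ∩ A.1) ∪ (C.1 ∩ B.1) :=
      Finset.inter_union_distrib_left _ _ _
    have hsub : (C.1 ∩ A.1) ∩ (C.1 ∩ B.1) ⊆ A.1 ∩ B.1 := by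
      intro x hx
      simp only [Finset.mem_inter] at hx ⊢
      tauto
    have hie := Finset.card_union_add_card_inter (C.1 ∩ A.1) (C.1 ∩ B.1)
    have hle := Finset.card_le_card hsub
    rw [hdist]
    omega
  -- choose a (s+2)-subset of C ∩ U for each C
  let g : {A : Finset (Fin m) // A.card = n} → Finset (Fin m) := fun C =>
    if h : s + 2 ≤ (C.1 ∩ U).card then (Finset.exists_subset_card_eq h).choose else ∅
  have hg : ∀ C ∈ F, g C ⊆ C.1 ∩ U ∧ (g C).card = s + 2 := by
    intro C hC
    have h := hkey C hC
    simp only [g, dif_pos h]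
    exact (Finset.exists_subset_card_eq h).choose_spec
  let S : Finset (Finset (Fin m) × Finset (Fin m)) :=
    (U.powersetCard (s + 2)).biUnion fun T => {T} ×ˢ Tᶜ.powersetCard (n - s - 2)
  have hFfin : F.Finite := Set.toFinite F
  have hmap : ∀ C ∈ hFfin.toFinset, (g C, C.1 \ g C) ∈ S := by
    intro C hC
    rw [Set.Finite.mem_toFinset] at hC
    obtain ⟨hsub, hcard⟩ := hg C hC
    refine Finset.mem_biUnion.mpr ⟨g C, ?_, ?_⟩
    · exact Finset.mem_powersetCard.mpr ⟨hsub.trans Finset.inter_subset_right, hcard⟩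
    · refine Finset.mem_product.mpr ⟨Finset.mem_singleton_self _, ?_⟩
      refine Finset.mem_powersetCard.mpr ⟨?_, ?_⟩
      · intro x hx
        simp only [Finset.mem_compl]
        exact (Finset.mem_sdiff.mp hx).2
      · have hgsubC : g C ⊆ C.1 := hsub.trans Finset.inter_subset_left
        rw [Finset.card_sdiff_of_subset hgsubC, C.2, hcard]
        omega
  have hinj : Set.InjOn (fun C => (g C, C.1 \ g C)) F := by
    intro C₁ h₁ C₂ h₂ heq
    simp only [Prod.mk.injEq] at heq
    have hg₁ : g C₁ ⊆ C₁.1 := (hg C₁ h₁).1.trans Finset.inter_subset_left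
    have hg₂ : g C₂ ⊆ C₂.1 := (hg C₂ h₂).1.trans Finset.inter_subset_left
    apply Subtype.ext
    have e1 : (C₁ : Finset (Fin m)) = g C₁ ∪ (C₁.1 \ g C₁) :=
      (Finset.union_sdiff_of_subset hg₁).symm
    have e2 : (C₂ : Finset (Fin m)) = g C₂ ∪ (C₂.1 \ g C₂) :=
      (Finset.union_sdiff_of_subset hg₂).symm
    rw [e1, e2, heq.2, heq.1]
  have hScard : S.card ≤ Nat.choose (2 * n) (s + 2) * Nat.choose (m - s - 2) (n - s - 2) := by
    calc S.card ≤ ∑ T ∈ U.powersetCard (s + 2), ({T} ×ˢ Tᶜ.powersetCard (n - s - 2)).card :=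
          Finset.card_biUnion_le
      _ = ∑ _T ∈ U.powersetCard (s + 2), Nat.choose (m - s - 2) (n - s - 2) := by
          apply Finset.sum_congr rfl
          intro T hT
          have hTcard := (Finset.mem_powersetCard.mp hT).2
          rw [Finset.card_product, Finset.card_singleton, one_mul,
            Finset.card_powersetCard, Finset.card_compl, hTcard, Fintype.card_fin,
            ← Nat.sub_sub]
      _ = (U.powersetCard (s + 2)).card * Nat.choose (m - s - 2) (n - s - 2) := by
          rw [Finset.sum_const, smul_eq_mul]
      _ ≤ _ := by
          apply Nat.mul_le_mul_right
          rw [Finset.card_powersetCard]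
          exact Nat.choose_le_choose _ hUcard
  rw [Set.ncard_eq_toFinset_card F hFfin]
  calc hFfin.toFinset.card ≤ S.card :=
        Finset.card_le_card_of_injOn _ hmap (by rwa [Set.Finite.coe_toFinset])
    _ ≤ _ := hScard

/-- every free independent set `F` of `KG(m,n,s)` with `m ≥ (s+2)(n-s)` has
`|F| ≤ C(2n, s+2)·C(m-s-2, n-s-2)`. -/
theorem stmt18 (m n s : ℕ) (hs : s < n) (hm : (s + 2) * (n - s) ≤ m)
    (F : Set {A : Finset (Fin m) // A.card = n}) (hF : IsFreeIndep (genKneser m n s) F) :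
    F.ncard ≤ Nat.choose (2 * n) (s + 2) * Nat.choose (m - s - 2) (n - s - 2) := by
  obtain ⟨hFind, M₁, M₂, hM₁, hM₂, hne, hF₁, hF₂⟩ := hF
  have hns : ¬ M₁ ⊆ M₂ := fun h => hne (hM₁.2 M₂ hM₂.1 h)
  obtain ⟨A, hA₁, hA₂⟩ := Set.not_subset.mp hns
  exact aux18 m n s F M₁ M₂ hM₁ hM₂ hF₁ hF₂ A hA₁ hA₂
end
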